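/- arXiv:2207.06589 — 6 statements merged into one kernel-verified Lean document; each statement's English description precedes it below -/
import Mathlib

section
/- Let H be a finite-dimensional complex inner product space and let P and Q be orthogonal projections on H (self-adjoint idempotent linear endomorphisms). Then there exists a finite family of pairwise-orthogonal subspaces (S_i) of H whose internal direct sum is all of H such that each S_i has dimension at most 2, each S_i is invariant under both P and Q, and for every S_i of dimension 2 the restrictions of P and of Q to S_i are each rank-one orthogonal projections of S_i. -/
open scoped InnerProductSpace

/-- `R` is an orthogonal projection: idempotent and self-adjoint (with respect to the
inner product of `H`). -/
def IsOrthogonalProjection {H : Type*} [NormedAddCommGroup H] [InnerProductSpace ℂ H]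
    (R : H →ₗ[ℂ] H) : Prop :=
  R ∘ₗ R = R ∧ ∀ x y : H, ⟪R x, y⟫_ℂ = ⟪x, R y⟫_ℂ

section Aux

open Module Submodule LinearMap

variable {H : Type*} [NormedAddCommGroup H] [InnerProductSpace ℂ H]

lemma IsOrthogonalProjection.restrict_inv {P : H →ₗ[ℂ] H} (hP : IsOrthogonalProjection P)
    {W : Submodule ℂ H} (h : ∀ x ∈ W, P x ∈ W) :
    IsOrthogonalProjection (P.restrict h) := by
  constructor
  · ext x
    exact congrArg Subtype.val (Subtype.ext (LinearMap.ext_iff.mp hP.1 (x : H)) :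
      (⟨P (P (x : H)), h _ (h _ x.2)⟩ : W) = ⟨P (x : H), h _ x.2⟩)
  · intro x y
    simp only [Submodule.coe_inner, LinearMap.restrict_coe_apply]
    exact hP.2 (x : H) (y : H)

lemma range_restrict_map_subtype (P : H →ₗ[ℂ] H) {W : Submodule ℂ H}
    (h : ∀ x ∈ W, P x ∈ W) :
    (LinearMap.range (P.restrict h)).map W.subtype = W.map P := by
  ext y
  simp only [Submodule.mem_map, LinearMap.mem_range]
  constructor
  · rintro ⟨z, ⟨x, rfl⟩, rfl⟩
    exact ⟨x, x.2, rfl⟩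
  · rintro ⟨w, hw, rfl⟩
    exact ⟨P.restrict h ⟨w, hw⟩, ⟨⟨w, hw⟩, rfl⟩, rfl⟩

lemma finrank_range_restrict (P : H →ₗ[ℂ] H) {W : Submodule ℂ H}
    (h : ∀ x ∈ W, P x ∈ W) :
    Module.finrank ℂ (LinearMap.range (P.restrict h)) = Module.finrank ℂ (W.map P) := by
  rw [← range_restrict_map_subtype P h, Submodule.finrank_map_subtype_eq]

lemma orth_inv {P : H →ₗ[ℂ] H} (hP : IsOrthogonalProjection P) {W : Submodule ℂ H}
    (h : ∀ x ∈ W, P x ∈ W) : ∀ x ∈ Wᗮ, P x ∈ Wᗮ := by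
  intro x hx
  rw [Submodule.mem_orthogonal] at hx ⊢
  intro u hu
  rw [← hP.2]
  exact hx _ (h u hu)

/-- The conclusion of Jordan's lemma, as a definition for induction purposes. -/
def JC (H : Type*) [NormedAddCommGroup H] [InnerProductSpace ℂ H]
    (P Q : H →ₗ[ℂ] H) : Prop :=
  ∃ (ι : Type) (_ : Fintype ι) (_ : DecidableEq ι) (S : ι → Submodule ℂ H)
    (hPinv : ∀ i, ∀ x ∈ S i, P x ∈ S i) (hQinv : ∀ i, ∀ x ∈ S i, Q x ∈ S i),
    (∀ i j, i ≠ j → ∀ x ∈ S i, ∀ y ∈ S j, ⟪x, y⟫_ℂ = 0) ∧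
    DirectSum.IsInternal S ∧
    (∀ i, Module.finrank ℂ (S i) ≤ 2) ∧
    (∀ i, Module.finrank ℂ (S i) = 2 →
      IsOrthogonalProjection (P.restrict (hPinv i)) ∧
      Module.finrank ℂ (LinearMap.range (P.restrict (hPinv i))) = 1 ∧
      IsOrthogonalProjection (Q.restrict (hQinv i)) ∧
      Module.finrank ℂ (LinearMap.range (Q.restrict (hQinv i))) = 1)

lemma jc_trivial [Subsingleton H] (P Q : H →ₗ[ℂ] H) : JC H P Q := by
  refine ⟨Empty, inferInstance, inferInstance, fun i => i.elim, fun i => i.elim,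
    fun i => i.elim, fun i => i.elim, ⟨?_, ?_⟩, fun i => i.elim, fun i => i.elim⟩
  · intro a b _
    apply Subsingleton.elim (α := DirectSum Empty _)
  · intro x
    exact ⟨0, Subsingleton.elim _ _⟩

lemma exists_block [FiniteDimensional ℂ H] [Nontrivial H] (P Q : H →ₗ[ℂ] H)
    (hP : IsOrthogonalProjection P) (hQ : IsOrthogonalProjection Q) :
    ∃ (S : Submodule ℂ H) (hSP : ∀ x ∈ S, P x ∈ S) (hSQ : ∀ x ∈ S, Q x ∈ S),
      0 < Module.finrank ℂ S ∧ Module.finrank ℂ S ≤ 2 ∧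
      (Module.finrank ℂ S = 2 →
        Module.finrank ℂ (LinearMap.range (P.restrict hSP)) = 1 ∧
        Module.finrank ℂ (LinearMap.range (Q.restrict hSQ)) = 1) := by
  have idemP : ∀ x, P (P x) = P x := fun x => LinearMap.ext_iff.mp hP.1 x
  have idemQ : ∀ x, Q (Q x) = Q x := fun x => LinearMap.ext_iff.mp hQ.1 x
  by_cases hcase : ∃ v : H, v ≠ 0 ∧ (P v = v ∨ P v = 0) ∧ (Q v = v ∨ Q v = 0)
  · obtain ⟨v, hv0, hPv, hQv⟩ := hcase
    have key : ∀ (R : H →ₗ[ℂ] H), (R v = v ∨ R v = 0) →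
        ∀ x ∈ Submodule.span ℂ {v}, R x ∈ Submodule.span ℂ {v} := by
      intro R hR x hx
      rw [Submodule.mem_span_singleton] at hx ⊢
      obtain ⟨c, rfl⟩ := hx
      rcases hR with h | h
      · exact ⟨c, by rw [map_smul, h]⟩
      · exact ⟨0, by rw [map_smul, h, smul_zero, zero_smul]⟩
    refine ⟨Submodule.span ℂ {v}, key P hPv, key Q hQv, ?_, ?_, ?_⟩
    · rw [finrank_span_singleton hv0]; norm_num
    · rw [finrank_span_singleton hv0]; norm_num
    · intro h2
      rw [finrank_span_singleton hv0] at h2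
      norm_num at h2
  · have hrP : LinearMap.range P ≠ ⊥ := by
      intro hbot
      have hP0 : P = 0 := LinearMap.range_eq_bot.mp hbot
      by_cases hrQ : LinearMap.range Q = ⊥
      · have hQ0 : Q = 0 := LinearMap.range_eq_bot.mp hrQ
        obtain ⟨u, hu⟩ := exists_ne (0 : H)
        exact hcase ⟨u, hu, Or.inr (by simp [hP0]), Or.inr (by simp [hQ0])⟩
      · obtain ⟨u, ⟨w, rfl⟩, hu0⟩ := (Submodule.ne_bot_iff _).mp hrQ
        exact hcase ⟨Q w, hu0, Or.inr (by simp [hP0]), Or.inl (idemQ w)⟩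
    haveI : Nontrivial ↥(LinearMap.range P) := Submodule.nontrivial_iff_ne_bot.mpr hrP
    have hTinv : ∀ x ∈ LinearMap.range P, (P ∘ₗ Q ∘ₗ P) x ∈ LinearMap.range P :=
      fun x _ => ⟨Q (P x), rfl⟩
    obtain ⟨μ, hμ⟩ := Module.End.exists_eigenvalue ((P ∘ₗ Q ∘ₗ P).restrict hTinv)
    obtain ⟨w, hw⟩ := hμ.exists_hasEigenvector
    have hTw : (P ∘ₗ Q ∘ₗ P).restrict hTinv w = μ • w :=
      Module.End.mem_eigenspace_iff.mp hw.1
    set v : H := (w : H) with hv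
    have hv0 : v ≠ 0 := fun h => hw.2 (Subtype.ext h)
    have hPv : P v = v := by
      obtain ⟨u, hu⟩ := w.2
      rw [hv, ← hu, idemP]
    have hPQv : P (Q v) = μ • v := by
      have h1 : P (Q (P v)) = μ • v := congrArg Subtype.val hTw
      rwa [hPv] at h1
    have hQv0 : Q v ≠ 0 := fun h => hcase ⟨v, hv0, Or.inl hPv, Or.inr h⟩
    have hQQv : Q (Q v) = Q v := idemQ v
    have hSP : ∀ x ∈ Submodule.span ℂ {v, Q v}, P x ∈ Submodule.span ℂ {v, Q v} := by
      intro x hx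
      rw [Submodule.mem_span_pair] at hx ⊢
      obtain ⟨a, b, rfl⟩ := hx
      refine ⟨a + b * μ, 0, ?_⟩
      rw [map_add, map_smul, map_smul, hPv, hPQv, smul_smul, add_smul, zero_smul, add_zero]
    have hSQ : ∀ x ∈ Submodule.span ℂ {v, Q v}, Q x ∈ Submodule.span ℂ {v, Q v} := by
      intro x hx
      rw [Submodule.mem_span_pair] at hx ⊢
      obtain ⟨a, b, rfl⟩ := hx
      refine ⟨0, a + b, ?_⟩
      rw [map_add, map_smul, map_smul, hQQv, add_smul, zero_smul, zero_add]
    refine ⟨Submodule.span ℂ {v, Q v}, hSP, hSQ, ?_, ?_, fun _ => ⟨?_, ?_⟩⟩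
    · have hle : Submodule.span ℂ {v} ≤ Submodule.span ℂ {v, Q v} :=
        Submodule.span_mono (by simp)
      have := Submodule.finrank_mono hle
      rw [finrank_span_singleton hv0] at this
      omega
    · have : Submodule.span ℂ ({v, Q v} : Set H) =
          Submodule.span ℂ {v} ⊔ Submodule.span ℂ {Q v} := by
        rw [← Submodule.span_union, Set.singleton_union]
      rw [this]
      have h1 := Submodule.finrank_sup_add_finrank_inf_eq
        (Submodule.span ℂ {v}) (Submodule.span ℂ {Q v})
      rw [finrank_span_singleton hv0, finrank_span_singleton hQv0] at h1
      omega
    · rw [finrank_range_restrict]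
      have hmap : (Submodule.span ℂ {v, Q v}).map P = Submodule.span ℂ {v} := by
        rw [Submodule.map_span, Set.image_pair, hPv, hPQv]
        apply le_antisymm
        · rw [Submodule.span_le]
          rintro x hx
          simp only [Set.mem_insert_iff, Set.mem_singleton_iff] at hx
          rcases hx with rfl | rfl
          · exact Submodule.mem_span_singleton_self v
          · exact Submodule.smul_mem _ μ (Submodule.mem_span_singleton_self v)
        · exact Submodule.span_mono (by simp)
      rw [hmap, finrank_span_singleton hv0]
    · rw [finrank_range_restrict]
      have hmap : (Submodule.span ℂ {v, Q v}).map Q = Submodule.span ℂ {Q v} := by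
        rw [Submodule.map_span, Set.image_pair, hQQv, Set.pair_eq_singleton]
      rw [hmap, finrank_span_singleton hQv0]

end Aux

section Main

open Module Submodule LinearMap

universe u

variable {H : Type u} [NormedAddCommGroup H] [InnerProductSpace ℂ H]

/-- Extend a family of submodules of `Sᗮ` by `S` itself, indexed by `Option ι`. -/
noncomputable def extendFam (S : Submodule ℂ H) {ι : Type} (S' : ι → Submodule ℂ ↥Sᗮ) :
    Option ι → Submodule ℂ H
  | none => S
  | some i => (S' i).map Sᗮ.subtype

@[simp] lemma extendFam_none (S : Submodule ℂ H) {ι : Type} (S' : ι → Submodule ℂ ↥Sᗮ) :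
    extendFam S S' none = S := rfl

@[simp] lemma extendFam_some (S : Submodule ℂ H) {ι : Type} (S' : ι → Submodule ℂ ↥Sᗮ)
    (i : ι) : extendFam S S' (some i) = (S' i).map Sᗮ.subtype := rfl

lemma jordan_aux (n : ℕ) :
    ∀ (H : Type u) [NormedAddCommGroup H] [InnerProductSpace ℂ H] [FiniteDimensional ℂ H]
      (P Q : H →ₗ[ℂ] H), IsOrthogonalProjection P → IsOrthogonalProjection Q →
      Module.finrank ℂ H ≤ n → JC H P Q := by
  induction n with
  | zero =>
    intro H _ _ _ P Q hP hQ hn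
    haveI : Subsingleton H := Module.finrank_zero_iff.mp (Nat.le_zero.mp hn)
    exact jc_trivial P Q
  | succ n ih =>
    intro H _ _ _ P Q hP hQ hn
    rcases Nat.eq_zero_or_pos (Module.finrank ℂ H) with h0 | hpos
    · haveI : Subsingleton H := Module.finrank_zero_iff.mp h0
      exact jc_trivial P Q
    haveI : Nontrivial H := Module.finrank_pos_iff.mp hpos
    obtain ⟨S, hSP, hSQ, hS1, hS2, hSrank⟩ := exists_block P Q hP hQ
    have hWP : ∀ x ∈ Sᗮ, P x ∈ Sᗮ := orth_inv hP hSP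
    have hWQ : ∀ x ∈ Sᗮ, Q x ∈ Sᗮ := orth_inv hQ hSQ
    have hfr : Module.finrank ℂ ↥Sᗮ ≤ n := by
      have := Submodule.finrank_add_finrank_orthogonal S
      omega
    obtain ⟨ι, _, _, S', hP'inv, hQ'inv, horth', hint', hle', hrk'⟩ :=
      ih ↥Sᗮ (P.restrict hWP) (Q.restrict hWQ)
        (hP.restrict_inv hWP) (hQ.restrict_inv hWQ) hfr
    classical
    have hOrth : ∀ (o o' : Option ι), o ≠ o' →
        ∀ x ∈ extendFam S S' o, ∀ y ∈ extendFam S S' o', ⟪x, y⟫_ℂ = 0 := by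
      intro o o' hne x hx y hy
      cases o with
      | none =>
        cases o' with
        | none => exact absurd rfl hne
        | some j =>
          rw [extendFam_some, Submodule.mem_map] at hy
          obtain ⟨u, hu, rfl⟩ := hy
          exact (Submodule.mem_orthogonal S (u : H)).mp u.2 x hx
      | some i =>
        cases o' with
        | none =>
          rw [inner_eq_zero_symm]
          rw [extendFam_some, Submodule.mem_map] at hx
          obtain ⟨u, hu, rfl⟩ := hx
          exact (Submodule.mem_orthogonal S (u : H)).mp u.2 y hy
        | some j =>
          rw [extendFam_some, Submodule.mem_map] at hx hy
          obtain ⟨u, hu, rfl⟩ := hx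
          obtain ⟨u', hu', rfl⟩ := hy
          exact horth' i j (fun h => hne (by rw [h])) u hu u' hu'
    refine ⟨Option ι, inferInstance, inferInstance, extendFam S S', ?_, ?_, hOrth, ?_, ?_, ?_⟩
    · intro o
      cases o with
      | none => exact hSP
      | some i =>
        rintro x ⟨y, hy, rfl⟩
        exact ⟨(P.restrict hWP) y, hP'inv i y hy, rfl⟩
    · intro o
      cases o with
      | none => exact hSQ
      | some i =>
        rintro x ⟨y, hy, rfl⟩
        exact ⟨(Q.restrict hWQ) y, hQ'inv i y hy, rfl⟩
    · refine DirectSum.isInternal_submodule_of_iSupIndep_of_iSup_eq_top ?_ ?_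
      · refine OrthogonalFamily.independent (V := extendFam S S') ?_
        intro o o' hne x y
        exact hOrth o o' hne (x : H) x.2 (y : H) y.2
      · rw [iSup_option]
        simp only [extendFam_none, extendFam_some]
        rw [← Submodule.map_iSup,
          ((DirectSum.isInternal_submodule_iff_iSupIndep_and_iSup_eq_top S').mp hint').2,
          Submodule.map_top, Submodule.range_subtype]
        exact Submodule.sup_orthogonal_of_hasOrthogonalProjection
    · intro o
      cases o with
      | none => exact hS2
      | some i =>
        rw [extendFam_some, Submodule.finrank_map_subtype_eq]
        exact hle' i
    · intro o h2
      cases o with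
      | none => exact ⟨hP.restrict_inv _, (hSrank h2).1, hQ.restrict_inv _, (hSrank h2).2⟩
      | some i =>
        have h2' : Module.finrank ℂ ↥(S' i) = 2 := by
          rw [← Submodule.finrank_map_subtype_eq Sᗮ (S' i)]
          exact h2
        obtain ⟨_, hr1, _, hr2⟩ := hrk' i h2'
        have key : ∀ (R : H →ₗ[ℂ] H) (hWR : ∀ x ∈ Sᗮ, R x ∈ Sᗮ)
            (hRinv : ∀ x ∈ (S' i).map Sᗮ.subtype, R x ∈ (S' i).map Sᗮ.subtype)
            (hR'inv : ∀ x ∈ S' i, (R.restrict hWR) x ∈ S' i),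
            Module.finrank ℂ (LinearMap.range (R.restrict hRinv)) =
              Module.finrank ℂ (LinearMap.range ((R.restrict hWR).restrict hR'inv)) := by
          intro R hWR hRinv hR'inv
          rw [finrank_range_restrict, finrank_range_restrict]
          have hcomm : R ∘ₗ Sᗮ.subtype = Sᗮ.subtype ∘ₗ (R.restrict hWR) :=
            LinearMap.ext fun _ => rfl
          rw [← Submodule.map_comp, hcomm, Submodule.map_comp,
            Submodule.finrank_map_subtype_eq]
        exact ⟨hP.restrict_inv _, (key P hWP _ (hP'inv i)).trans hr1,
          hQ.restrict_inv _, (key Q hWQ _ (hQ'inv i)).trans hr2⟩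

end Main

/-- **Jordan's lemma for two projections.** Any two orthogonal projections `P`, `Q` on a
finite-dimensional complex inner product space admit a simultaneous orthogonal decomposition
of the space into invariant subspaces of dimension at most 2; on each two-dimensional block the
restrictions of `P` and `Q` are rank-one orthogonal projections. -/
theorem jordan_lemma_two_projections
    {H : Type*} [NormedAddCommGroup H] [InnerProductSpace ℂ H] [FiniteDimensional ℂ H]
    (P Q : H →ₗ[ℂ] H)
    (hP : IsOrthogonalProjection P) (hQ : IsOrthogonalProjection Q) :
    ∃ (ι : Type) (_ : Fintype ι) (_ : DecidableEq ι) (S : ι → Submodule ℂ H)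
      (hPinv : ∀ i, ∀ x ∈ S i, P x ∈ S i) (hQinv : ∀ i, ∀ x ∈ S i, Q x ∈ S i),
      (∀ i j, i ≠ j → ∀ x ∈ S i, ∀ y ∈ S j, ⟪x, y⟫_ℂ = 0) ∧
      DirectSum.IsInternal S ∧
      (∀ i, Module.finrank ℂ (S i) ≤ 2) ∧
      (∀ i, Module.finrank ℂ (S i) = 2 →
        IsOrthogonalProjection (P.restrict (hPinv i)) ∧
        Module.finrank ℂ (LinearMap.range (P.restrict (hPinv i))) = 1 ∧
        IsOrthogonalProjection (Q.restrict (hQinv i)) ∧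
        Module.finrank ℂ (LinearMap.range (Q.restrict (hQinv i))) = 1) := by
  exact jordan_aux (Module.finrank ℂ H) H P Q hP hQ le_rfl
end

section
/- Let H be a finite-dimensional complex inner product space, let P and Q be orthogonal projections on H, and let w ∈ [0,1]. Suppose φ₀ and φ₁ are eigenvectors of wP + (1−w)Q with respective eigenvalues λ₀ and λ₁. If λ₀ + λ₁ ≠ 1 and λ₀ ≠ λ₁, then ⟨φ₀, P φ₁⟩ = 0 and ⟨φ₀, Q φ₁⟩ = 0. -/
open scoped InnerProductSpace

/-- Eigenvalues of an idempotent map are 0 or 1. -/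
lemma proj_eig_aux {H : Type*} [NormedAddCommGroup H] [InnerProductSpace ℂ H]
    (R : H →ₗ[ℂ] H) (hR : R ∘ₗ R = R) (φ : H) (hφ : φ ≠ 0) (lam : ℂ)
    (h : R φ = lam • φ) : lam = 0 ∨ lam = 1 := by
  have h2 : R (R φ) = R φ := by
    have := LinearMap.ext_iff.mp hR φ
    simpa using this
  rw [h, map_smul, h, smul_smul] at h2
  have : (lam * lam - lam) • φ = 0 := by
    rw [sub_smul]; rw [h2]; simp
  rcases smul_eq_zero.mp this with h3 | h3
  · have : lam * (lam - 1) = 0 := by linear_combination h3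
    rcases mul_eq_zero.mp this with h4 | h4
    · exact Or.inl h4
    · exact Or.inr (sub_eq_zero.mp h4)
  · exact absurd h3 hφ

/-- **Cross-term corollary of Jordan's lemma.** If `φ₀, φ₁` are eigenvectors of
`w • P + (1 - w) • Q` with eigenvalues `λ₀, λ₁` satisfying `λ₀ + λ₁ ≠ 1` and `λ₀ ≠ λ₁`,
then `⟪φ₀, P φ₁⟫ = ⟪φ₀, Q φ₁⟫ = 0`. -/
theorem cross_terms_vanish
    {H : Type*} [NormedAddCommGroup H] [InnerProductSpace ℂ H] [FiniteDimensional ℂ H]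
    (P Q : H →ₗ[ℂ] H)
    (hP : IsOrthogonalProjection P) (hQ : IsOrthogonalProjection Q)
    (w : ℝ) (hw : w ∈ Set.Icc (0 : ℝ) 1)
    (φ₀ φ₁ : H) (hφ₀ : φ₀ ≠ 0) (hφ₁ : φ₁ ≠ 0)
    (lam₀ lam₁ : ℂ)
    (heig₀ : ((w : ℂ) • P + ((1 - w : ℝ) : ℂ) • Q) φ₀ = lam₀ • φ₀)
    (heig₁ : ((w : ℂ) • P + ((1 - w : ℝ) : ℂ) • Q) φ₁ = lam₁ • φ₁)
    (hsum : lam₀ + lam₁ ≠ 1) (hne : lam₀ ≠ lam₁) :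
    ⟪φ₀, P φ₁⟫_ℂ = 0 ∧ ⟪φ₀, Q φ₁⟫_ℂ = 0 := by
  have hcast : ((1 - w : ℝ) : ℂ) = 1 - (w : ℂ) := by push_cast; ring
  set W : ℂ := (w : ℂ) with hWdef
  have h₀ : W • P φ₀ + (1 - W) • Q φ₀ = lam₀ • φ₀ := by
    simpa [LinearMap.add_apply, LinearMap.smul_apply, hcast] using heig₀
  have h₁ : W • P φ₁ + (1 - W) • Q φ₁ = lam₁ • φ₁ := by
    simpa [LinearMap.add_apply, LinearMap.smul_apply, hcast] using heig₁
  have hconjW : (starRingEnd ℂ) W = W := Complex.conj_ofReal w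
  -- pointwise self-adjointness of the operator
  have hsa : ∀ x y : H, ⟪W • P x + (1 - W) • Q x, y⟫_ℂ
      = ⟪x, W • P y + (1 - W) • Q y⟫_ℂ := by
    intro x y
    simp only [inner_add_left, inner_add_right, inner_smul_left, inner_smul_right,
      map_sub, map_one, hconjW, hP.2 x y, hQ.2 x y]
  -- lam₀ is real
  have hreal : (starRingEnd ℂ) lam₀ = lam₀ := by
    have h := hsa φ₀ φ₀
    rw [h₀] at h
    simp only [inner_smul_left, inner_smul_right] at h
    exact mul_right_cancel₀ (inner_self_ne_zero.mpr hφ₀) h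
  -- orthogonality of the eigenvectors
  have horth : ⟪φ₀, φ₁⟫_ℂ = 0 := by
    have h := hsa φ₀ φ₁
    rw [h₀, h₁] at h
    simp only [inner_smul_left, inner_smul_right, hreal] at h
    have : (lam₀ - lam₁) * ⟪φ₀, φ₁⟫_ℂ = 0 := by linear_combination h
    rcases mul_eq_zero.mp this with h' | h'
    · exact absurd (sub_eq_zero.mp h') hne
    · exact h'
  set a : ℂ := ⟪φ₀, P φ₁⟫_ℂ with ha_def
  set b : ℂ := ⟪φ₀, Q φ₁⟫_ℂ with hb_def
  set c : ℂ := ⟪φ₀, P (Q φ₁)⟫_ℂ with hc_def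
  have hPP : P (P φ₁) = P φ₁ := by
    have := LinearMap.ext_iff.mp hP.1 φ₁; simpa using this
  have hQQ : Q (Q φ₁) = Q φ₁ := by
    have := LinearMap.ext_iff.mp hQ.1 φ₁; simpa using this
  have eq5 : W * a + (1 - W) * b = 0 := by
    have h := congrArg (fun v => ⟪φ₀, v⟫_ℂ) h₁
    simpa [inner_add_right, inner_smul_right, horth] using h
  have eq1 : lam₁ * a = W * a + (1 - W) * c := by
    have h := congrArg (fun v => ⟪φ₀, P v⟫_ℂ) h₁
    simp only [map_add, map_smul, inner_add_right, inner_smul_right, hPP] at h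
    linear_combination h.symm
  have eq4 : lam₀ * b = (1 - W) * b + W * c := by
    have h := hsa φ₀ (Q φ₁)
    rw [h₀, hQQ] at h
    simp only [inner_smul_left, inner_smul_right, inner_add_right, hreal] at h
    linear_combination h
  by_cases hw0 : w = 0
  · -- degenerate case: the operator equals Q, eigenvalues ∈ {0,1}
    exfalso
    subst hw0
    have e₀ : Q φ₀ = lam₀ • φ₀ := by simpa [hWdef] using h₀
    have e₁ : Q φ₁ = lam₁ • φ₁ := by simpa [hWdef] using h₁
    rcases proj_eig_aux Q hQ.1 φ₀ hφ₀ lam₀ e₀ with h' | h' <;>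
      rcases proj_eig_aux Q hQ.1 φ₁ hφ₁ lam₁ e₁ with h'' | h'' <;>
      simp_all
  by_cases hw1 : w = 1
  · exfalso
    subst hw1
    have e₀ : P φ₀ = lam₀ • φ₀ := by simpa [hWdef] using h₀
    have e₁ : P φ₁ = lam₁ • φ₁ := by simpa [hWdef] using h₁
    rcases proj_eig_aux P hP.1 φ₀ hφ₀ lam₀ e₀ with h' | h' <;>
      rcases proj_eig_aux P hP.1 φ₁ hφ₁ lam₁ e₁ with h'' | h'' <;>
      simp_all
  -- generic case
  have hW0 : W ≠ 0 := by
    simpa [hWdef] using Complex.ofReal_ne_zero.mpr hw0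
  have hW1 : (1 : ℂ) - W ≠ 0 := by
    rw [hWdef, sub_ne_zero]
    exact fun h => hw1 (by exact_mod_cast h.symm)
  have key : W * ((lam₀ + lam₁) - 1) * a = 0 := by
    linear_combination W * eq1 - (1 - W) * eq4 + (lam₀ - (1 - W)) * eq5
  have ha : a = 0 := by
    rcases mul_eq_zero.mp key with h' | h'
    · rcases mul_eq_zero.mp h' with h'' | h''
      · exact absurd h'' hW0
      · exact absurd (by linear_combination h'' : lam₀ + lam₁ = 1) hsum
    · exact h'
  have hb : b = 0 := by
    have : (1 - W) * b = 0 := by linear_combination eq5 - W * ha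
    exact (mul_eq_zero.mp this).resolve_left hW1
  exact ⟨ha, hb⟩
end

section
/- Let H be a finite-dimensional complex inner product space, let P and Q be orthogonal projections on H, let w ∈ [0,1], and let T = wP + (1−w)Q. Fix c ≥ 0. Suppose x lies in the span of eigenvectors of T whose eigenvalues λ satisfy |λ − 1/2| ≤ c, and y lies in the span of eigenvectors of T whose eigenvalues λ satisfy |λ − 1/2| > c. Then ⟨x, P y⟩ = 0 and ⟨x, Q y⟩ = 0. -/
open scoped InnerProductSpace

/-- If `x` lies in the span of eigenvectors of `T = w • P + (1-w) • Q` with (real) eigenvalues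
within `c` of `1/2`, and `y` lies in the span of eigenvectors with eigenvalues farther than `c`
from `1/2`, then the cross terms `⟪x, P y⟫` and `⟪x, Q y⟫` vanish. -/
theorem cross_terms_vanish_on_eigenvector_spans
    {H : Type*} [NormedAddCommGroup H] [InnerProductSpace ℂ H] [FiniteDimensional ℂ H]
    (P Q : H →ₗ[ℂ] H)
    (hP : IsOrthogonalProjection P) (hQ : IsOrthogonalProjection Q)
    (w : ℝ) (hw : w ∈ Set.Icc (0 : ℝ) 1) (c : ℝ) (hc : 0 ≤ c)
    (x y : H)
    (hx : x ∈ ⨆ (μ : ℝ) (_ : |μ - 1/2| ≤ c),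
      Module.End.eigenspace ((w : ℂ) • P + ((1 - w : ℝ) : ℂ) • Q) (μ : ℂ))
    (hy : y ∈ ⨆ (μ : ℝ) (_ : |μ - 1/2| > c),
      Module.End.eigenspace ((w : ℂ) • P + ((1 - w : ℝ) : ℂ) • Q) (μ : ℂ)) :
    ⟪x, P y⟫_ℂ = 0 ∧ ⟪x, Q y⟫_ℂ = 0 := by
  set T : H →ₗ[ℂ] H := (w : ℂ) • P + ((1 - w : ℝ) : ℂ) • Q with hT
  set S : H →ₗ[ℂ] H := T ∘ₗ T - T with hS
  have hp : ∀ z, P (P z) = P z := fun z => LinearMap.congr_fun hP.1 z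
  have hq : ∀ z, Q (Q z) = Q z := fun z => LinearMap.congr_fun hQ.1 z
  -- T is symmetric
  have hTsym : ∀ a b : H, ⟪T a, b⟫_ℂ = ⟪a, T b⟫_ℂ := by
    intro a b
    simp only [hT, LinearMap.add_apply, LinearMap.smul_apply, inner_add_left, inner_add_right,
      inner_smul_left, inner_smul_right, Complex.conj_ofReal, hP.2 a b, hQ.2 a b]
  have hSsym : ∀ a b : H, ⟪S a, b⟫_ℂ = ⟪a, S b⟫_ℂ := by
    intro a b
    simp [hS, inner_sub_left, inner_sub_right, hTsym]
  -- S commutes with P and Q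
  have hcommP : ∀ z, S (P z) = P (S z) := by
    intro z
    simp only [hS, hT, LinearMap.sub_apply, LinearMap.comp_apply, LinearMap.add_apply,
      LinearMap.smul_apply, map_add, map_sub, map_smul, hp, hq]
    module
  have hcommQ : ∀ z, S (Q z) = Q (S z) := by
    intro z
    simp only [hS, hT, LinearMap.sub_apply, LinearMap.comp_apply, LinearMap.add_apply,
      LinearMap.smul_apply, map_add, map_sub, map_smul, hp, hq]
    module
  -- main step
  have main : ∀ R : H →ₗ[ℂ] H, (∀ z, S (R z) = R (S z)) → ⟪x, R y⟫_ℂ = 0 := by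
    intro R hcomm
    have hN : (⨆ (μ : ℝ) (_ : |μ - 1/2| > c), Module.End.eigenspace T (μ : ℂ)) ≤
        LinearMap.ker ((innerₛₗ ℂ x).comp R) := by
      refine iSup₂_le fun ν hν y' hy' => ?_
      have hTy' : T y' = (ν : ℂ) • y' := Module.End.mem_eigenspace_iff.mp hy'
      have hcore : ⟪x, R y'⟫_ℂ = 0 := by
        have hM : (⨆ (μ : ℝ) (_ : |μ - 1/2| ≤ c), Module.End.eigenspace T (μ : ℂ)) ≤
            LinearMap.ker (innerₛₗ ℂ (R y')) := by
          refine iSup₂_le fun μ hμ x' hx' => ?_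
          have hTx' : T x' = (μ : ℂ) • x' := Module.End.mem_eigenspace_iff.mp hx'
          have hSx' : S x' = ((μ : ℂ) ^ 2 - μ) • x' := by
            simp only [hS, LinearMap.sub_apply, LinearMap.comp_apply, hTx', map_smul, smul_smul, sub_smul, sq]
          have hSy' : S y' = ((ν : ℂ) ^ 2 - ν) • y' := by
            simp only [hS, LinearMap.sub_apply, LinearMap.comp_apply, hTy', map_smul, smul_smul, sub_smul, sq]
          have hSRy' : S (R y') = ((ν : ℂ) ^ 2 - ν) • R y' := by
            rw [hcomm, hSy', map_smul]
          have e1 : ⟪x', S (R y')⟫_ℂ = ((ν : ℂ) ^ 2 - ν) * ⟪x', R y'⟫_ℂ := by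
            rw [hSRy', inner_smul_right]
          have e2 : ⟪x', S (R y')⟫_ℂ = ((μ : ℂ) ^ 2 - μ) * ⟪x', R y'⟫_ℂ := by
            rw [← hSsym, hSx', inner_smul_left]
            simp [Complex.conj_ofReal]
          have hne : ((μ : ℂ) ^ 2 - μ) ≠ ((ν : ℂ) ^ 2 - ν) := by
            intro h
            have h' : μ ^ 2 - μ = ν ^ 2 - ν := by
              exact_mod_cast h
            have h1 : |μ - 1/2| ^ 2 ≤ c ^ 2 := by
              have := abs_nonneg (μ - 1/2)
              nlinarith
            have h2 : c ^ 2 < |ν - 1/2| ^ 2 := by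
              nlinarith
            have h3 : (μ - 1/2) ^ 2 = (ν - 1/2) ^ 2 := by nlinarith
            rw [← sq_abs (μ - 1/2), ← sq_abs (ν - 1/2)] at h3
            nlinarith
          have hz : ⟪x', R y'⟫_ℂ = 0 := by
            have := e1.symm.trans e2
            have hfac : (((μ : ℂ) ^ 2 - μ) - ((ν : ℂ) ^ 2 - ν)) * ⟪x', R y'⟫_ℂ = 0 := by
              linear_combination -this
            rcases mul_eq_zero.mp hfac with h | h
            · exact absurd (sub_eq_zero.mp h) hne
            · exact h
          simp only [LinearMap.mem_ker, innerₛₗ_apply_apply]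
          rw [← inner_conj_symm, hz, map_zero]
        have := hM hx
        simp only [LinearMap.mem_ker, innerₛₗ_apply_apply] at this
        rw [← inner_conj_symm, this, map_zero]
      simpa only [LinearMap.mem_ker, LinearMap.comp_apply, innerₛₗ_apply_apply] using hcore
    have := hN hy
    simpa only [LinearMap.mem_ker, LinearMap.comp_apply, innerₛₗ_apply_apply] using this
  exact ⟨main P hcommP, main Q hcommQ⟩
end

section
/- Let m, k ≥ 1, let P₀, P₁ be orthogonal projections on ℂ^m and Q₀, Q₁ orthogonal projections on ℂ^k, let w ∈ [0,1] and ε > 0. Set M = wP₀ + (1−w)P₁ and N = wQ₀ + (1−w)Q₁. Let S_near be the sum of eigenspaces of M for eigenvalues λ with |λ − 1/2| ≤ |w − 1/2| + ε, let S_far be the sum of eigenspaces of M for eigenvalues λ with |λ − 1/2| > |w − 1/2| + ε, and let T_near be the sum of eigenspaces of N for eigenvalues μ with |μ − 1/2| ≤ |w − 1/2| + ε. Suppose v is a unit vector in the tensor product ℂ^m ⊗ ℂ^k (with the induced inner product) which decomposes as v = v_B + v_C with v_B ∈ S_near ⊗ ℂ^k and v_C ∈ S_far ⊗ T_near. Then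 w·‖(P₀ ⊗ Q₀) v‖² + (1−w)·‖(P₁ ⊗ Q₁) v‖² ≤ max(w, 1−w) + ε. -/
open scoped Kronecker

/-- The sum of the eigenspaces of (the linear map induced by) the matrix `M` for the real
eigenvalues lying in the set `s`. -/
noncomputable def eigSpan {m : ℕ} (M : Matrix (Fin m) (Fin m) ℂ) (s : Set ℝ) :
    Submodule ℂ (EuclideanSpace ℂ (Fin m)) :=
  ⨆ (μ : ℝ) (_ : μ ∈ s), Module.End.eigenspace (Matrix.toEuclideanLin M) (μ : ℂ)

/-- The tensor product `S ⊗ T` of subspaces `S ≤ ℂ^m` and `T ≤ ℂ^k`, realized inside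
`ℂ^{m·k} = EuclideanSpace ℂ (Fin m × Fin k)` as the span of the elementary tensors
`x ⊗ y`, `(x ⊗ y)(p) = x p.1 * y p.2`, with `x ∈ S`, `y ∈ T`. -/
noncomputable def tensorSubmodule {m k : ℕ} (S : Submodule ℂ (EuclideanSpace ℂ (Fin m)))
    (T : Submodule ℂ (EuclideanSpace ℂ (Fin k))) :
    Submodule ℂ (EuclideanSpace ℂ (Fin m × Fin k)) :=
  Submodule.span ℂ
    {u : EuclideanSpace ℂ (Fin m × Fin k) |
      ∃ x ∈ S, ∃ y ∈ T, ∀ p : Fin m × Fin k, u p = x p.1 * y p.2}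

namespace ICBAux

set_option linter.unusedSectionVars false
set_option linter.unusedTactic false

variable {V : Type*} [NormedAddCommGroup V] [InnerProductSpace ℂ V]

/-- Sum of eigenspaces of `f` over real eigenvalues in `s`. -/
noncomputable def rSpan (f : V →ₗ[ℂ] V) (s : Set ℝ) : Submodule ℂ V :=
  ⨆ (μ : ℝ) (_ : μ ∈ s), Module.End.eigenspace f (μ : ℂ)

lemma mem_rSpan_of_eigen {f : V →ₗ[ℂ] V} {s : Set ℝ} {μ : ℝ} (hμ : μ ∈ s) {x : V}
    (hx : x ∈ Module.End.eigenspace f (μ : ℂ)) : x ∈ rSpan f s := by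
  exact (le_iSup₂ (f := fun (μ : ℝ) (_ : μ ∈ s) => Module.End.eigenspace f (μ : ℂ)) μ hμ) hx

lemma rSpan_mono {f : V →ₗ[ℂ] V} {s t : Set ℝ} (h : s ⊆ t) : rSpan f s ≤ rSpan f t :=
  iSup₂_le fun μ hμ => le_iSup₂_of_le μ (h hμ) le_rfl

/-- Kernel of `y ↦ ⟪x, y⟫` as a submodule. -/
def innerKer (x : V) : Submodule ℂ V where
  carrier := {y | inner ℂ x y = (0 : ℂ)}
  add_mem' := by
    intro a b ha hb; simp only [Set.mem_setOf_eq, inner_add_right] at *; rw [ha, hb, add_zero]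
  zero_mem' := inner_zero_right x
  smul_mem' := by
    intro c y hy; simp only [Set.mem_setOf_eq, inner_smul_right] at *; rw [hy, mul_zero]

lemma inner_eigen_rSpan {f : V →ₗ[ℂ] V} (hf : f.IsSymmetric) {t : Set ℝ} {μ : ℝ}
    (hμ : μ ∉ t) {x y : V} (hx : x ∈ Module.End.eigenspace f (μ : ℂ)) (hy : y ∈ rSpan f t) :
    inner ℂ x y = (0 : ℂ) := by
  have h : rSpan f t ≤ innerKer x := by
    refine iSup₂_le fun ν hν => fun z hz => ?_
    have hne : (μ : ℂ) ≠ (ν : ℂ) := by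
      intro h; apply hμ; have : μ = ν := by exact_mod_cast h
      rwa [this]
    exact hf.orthogonalFamily_eigenspaces hne ⟨x, hx⟩ ⟨z, hz⟩
  exact h hy

lemma inner_rSpan_rSpan {f : V →ₗ[ℂ] V} (hf : f.IsSymmetric) {s t : Set ℝ}
    (hst : ∀ μ ∈ s, μ ∉ t) {x y : V} (hx : x ∈ rSpan f s) (hy : y ∈ rSpan f t) :
    inner ℂ x y = (0 : ℂ) := by
  have h : rSpan f s ≤ innerKer y := by
    refine iSup₂_le fun μ hμ => fun z hz => ?_
    show inner ℂ y z = (0 : ℂ)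
    rw [inner_eq_zero_symm]
    exact inner_eigen_rSpan hf (hst μ hμ) hz hy
  have := h hx
  rw [inner_eq_zero_symm]
  exact this

lemma rSpan_inf_eq_bot {f : V →ₗ[ℂ] V} (hf : f.IsSymmetric) {s t : Set ℝ}
    (hst : ∀ μ ∈ s, μ ∉ t) : rSpan f s ⊓ rSpan f t = ⊥ := by
  rw [eq_bot_iff]
  intro x hx
  have h0 : inner ℂ x x = (0 : ℂ) := inner_rSpan_rSpan hf hst hx.1 hx.2
  simpa using inner_self_eq_zero.mp h0

lemma commute_maps_eigenspace {f g : V →ₗ[ℂ] V} (h : f ∘ₗ g = g ∘ₗ f) (c : ℂ) {x : V}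
    (hx : x ∈ Module.End.eigenspace f c) : g x ∈ Module.End.eigenspace f c := by
  rw [Module.End.mem_eigenspace_iff] at hx ⊢
  have h' : f (g x) = g (f x) := congrFun (congrArg (fun F => F.toFun) h) x
  rw [h', hx, map_smul]

lemma rSpan_mapsTo {f g : V →ₗ[ℂ] V} (h : f ∘ₗ g = g ∘ₗ f) (s : Set ℝ) {x : V}
    (hx : x ∈ rSpan f s) : g x ∈ rSpan f s := by
  have : rSpan f s ≤ (rSpan f s).comap g := by
    refine iSup₂_le fun μ hμ => fun z hz => ?_
    exact mem_rSpan_of_eigen hμ (commute_maps_eigenspace h _ hz)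
  exact this hx

lemma proj_inner {f : V →ₗ[ℂ] V} (hf : f.IsSymmetric) (hidem : f ∘ₗ f = f) (u : V) :
    inner ℂ u (f u) = ((‖f u‖ : ℂ)) ^ 2 := by
  have h1 : f (f u) = f u := congrFun (congrArg (fun F => F.toFun) hidem) u
  have h2 : inner ℂ (f u) (f u) = (inner ℂ u (f (f u)) : ℂ) := hf u (f u)
  rw [h1] at h2
  rw [← h2, inner_self_eq_norm_sq_to_K]; norm_cast

lemma proj_inner_re {f : V →ₗ[ℂ] V} (hf : f.IsSymmetric) (hidem : f ∘ₗ f = f) (u : V) :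
    (inner ℂ u (f u) : ℂ).re = ‖f u‖ ^ 2 := by
  rw [proj_inner hf hidem u]
  norm_cast

lemma isSymmetric_comp {f : V →ₗ[ℂ] V} (hf : f.IsSymmetric) : (f ∘ₗ f).IsSymmetric := by
  intro x y
  simp only [LinearMap.comp_apply]
  rw [hf (f x) y, hf x (f y)]

lemma conj_mul_self_re (z : ℂ) : ((starRingEnd ℂ) z * z).re = ‖z‖ ^ 2 := by
  simp [← Complex.normSq_eq_conj_mul_self, Complex.normSq_eq_norm_sq]
  norm_cast

lemma re_conj_mul_smul (r : ℝ) (z : ℂ) :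
    ((starRingEnd ℂ) z * ((r : ℂ) * z)).re = r * ‖z‖ ^ 2 := by
  have h : (starRingEnd ℂ) z * ((r : ℂ) * z) = (r : ℂ) * ((starRingEnd ℂ) z * z) := by ring
  rw [h, Complex.mul_re, Complex.ofReal_re, Complex.ofReal_im, conj_mul_self_re]
  ring

lemma re_ofReal_mul (r : ℝ) (z : ℂ) : ((r : ℂ) * z).re = r * z.re := by
  rw [Complex.mul_re, Complex.ofReal_re, Complex.ofReal_im]
  ring

variable [FiniteDimensional ℂ V]

lemma rSpan_univ_eq_top {f : V →ₗ[ℂ] V} (hf : f.IsSymmetric) : rSpan f Set.univ = ⊤ := by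
  rw [eq_top_iff]
  have h1 : (⨆ μ : ℂ, Module.End.eigenspace f μ) = ⊤ :=
    Submodule.orthogonal_eq_bot_iff.mp hf.orthogonalComplement_iSup_eigenspaces_eq_bot
  rw [← h1]
  refine iSup_le fun c => ?_
  by_cases hc : Module.End.eigenspace f c = ⊥
  · rw [hc]; exact bot_le
  · have hev : Module.End.HasEigenvalue f c := hc
    have hre := hf.conj_eigenvalue_eq_self hev
    have hcr : ((c.re : ℝ) : ℂ) = c := Complex.conj_eq_iff_re.mp hre
    have : Module.End.eigenspace f c = Module.End.eigenspace f ((c.re : ℝ) : ℂ) := by rw [hcr]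
    rw [this]
    exact le_iSup₂ (f := fun (μ : ℝ) (_ : μ ∈ Set.univ) => Module.End.eigenspace f (μ : ℂ))
      c.re (Set.mem_univ _)

lemma rSpan_sup_compl_eq_top {f : V →ₗ[ℂ] V} (hf : f.IsSymmetric) (s : Set ℝ) :
    rSpan f s ⊔ rSpan f sᶜ = ⊤ := by
  rw [eq_top_iff, ← rSpan_univ_eq_top hf]
  refine iSup₂_le fun μ _ => ?_
  by_cases hμ : μ ∈ s
  · exact le_sup_of_le_left (le_iSup₂_of_le μ hμ le_rfl)
  · exact le_sup_of_le_right (le_iSup₂_of_le μ hμ le_rfl)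

/-- If `K` acts on each eigenspace of `f` (eigenvalue `μ`) as scalar `φ μ`, then the
`f`-span over `φ ⁻¹' t` equals the `K`-span over `t`. -/
lemma rSpan_eq_rSpan {f K : V →ₗ[ℂ] V} (hf : f.IsSymmetric) (hK : K.IsSymmetric)
    (φ : ℝ → ℝ)
    (heig : ∀ (μ : ℝ), Module.End.eigenspace f (μ : ℂ) ≤ Module.End.eigenspace K ((φ μ : ℝ) : ℂ))
    (t : Set ℝ) : rSpan f (φ ⁻¹' t) = rSpan K t := by
  have hle : ∀ u : Set ℝ, rSpan f (φ ⁻¹' u) ≤ rSpan K u := by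
    intro u
    refine iSup₂_le fun μ hμ => ?_
    exact le_trans (heig μ) (le_iSup₂_of_le (φ μ) hμ le_rfl)
  refine le_antisymm (hle t) ?_
  intro x hx
  have hsplit := rSpan_sup_compl_eq_top hf (φ ⁻¹' t)
  have hx' : x ∈ rSpan f (φ ⁻¹' t) ⊔ rSpan f (φ ⁻¹' t)ᶜ := hsplit ▸ Submodule.mem_top
  obtain ⟨a, ha, b, hb, hab⟩ := Submodule.mem_sup.mp hx'
  have hbc : b ∈ rSpan K tᶜ := by
    have : (φ ⁻¹' t)ᶜ = φ ⁻¹' tᶜ := rfl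
    exact hle tᶜ (this ▸ hb)
  have hbt : b ∈ rSpan K t := by
    have hxa : b = x - a := by rw [← hab]; abel
    rw [hxa]
    exact Submodule.sub_mem _ hx (hle t ha)
  have hbot := rSpan_inf_eq_bot hK (s := t) (t := tᶜ) (fun μ hμ => by simpa using hμ)
  have hb0 : b = 0 := by
    have : b ∈ rSpan K t ⊓ rSpan K tᶜ := ⟨hbt, hbc⟩
    rw [hbot] at this
    simpa using this
  rw [← hab, hb0, add_zero]
  exact ha

lemma quad_bound' {f : V →ₗ[ℂ] V} (hf : f.IsSymmetric) {s : Set ℝ}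
    {c : ℝ} (hs : ∀ μ ∈ s, μ ≤ c) {u : V}
    (hvanish : ∀ (i : Fin (Module.finrank ℂ V)),
      hf.eigenvalues rfl i ∉ s → (hf.eigenvectorBasis rfl).repr u i = 0) :
    (inner ℂ u (f u) : ℂ).re ≤ c * ‖u‖ ^ 2 := by
  set n := Module.finrank ℂ V
  have hn : Module.finrank ℂ V = n := rfl
  set b := hf.eigenvectorBasis hn with hb
  have hinner : ∀ z : V,
      (inner ℂ u z : ℂ) = ∑ i, (starRingEnd ℂ) (b.repr u i) * (b.repr z i) := by
    intro z
    rw [← LinearIsometryEquiv.inner_map_map b.repr u z, PiLp.inner_apply]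
    simp [RCLike.inner_apply, mul_comm]
  have hfu : (inner ℂ u (f u) : ℂ).re
      = ∑ i, (hf.eigenvalues hn i) * ‖b.repr u i‖ ^ 2 := by
    rw [hinner (f u), Complex.re_sum]
    refine Finset.sum_congr rfl fun i _ => ?_
    rw [hf.eigenvectorBasis_apply_self_apply hn u i, ← hb]
    exact re_conj_mul_smul _ _
  have hnorm : ‖u‖ ^ 2 = ∑ i, ‖b.repr u i‖ ^ 2 := by
    have h0 : RCLike.re (inner ℂ u u : ℂ) = ‖u‖ ^ 2 := inner_self_eq_norm_sq u
    have h0' : (inner ℂ u u : ℂ).re = ‖u‖ ^ 2 := h0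
    rw [hinner u, Complex.re_sum] at h0'
    rw [← h0']
    exact (Finset.sum_congr rfl fun i _ => conj_mul_self_re _)
  rw [hfu, hnorm, Finset.mul_sum]
  refine Finset.sum_le_sum fun i _ => ?_
  by_cases hi : hf.eigenvalues hn i ∈ s
  · exact mul_le_mul_of_nonneg_right (hs _ hi) (by positivity)
  · rw [hvanish i hi]
    simp

lemma quad_bound {f : V →ₗ[ℂ] V} (hf : f.IsSymmetric) {s : Set ℝ}
    {c : ℝ} (hs : ∀ μ ∈ s, μ ≤ c) {u : V} (hu : u ∈ rSpan f s) :
    (inner ℂ u (f u) : ℂ).re ≤ c * ‖u‖ ^ 2 := by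
  refine quad_bound' hf hs fun i hi => ?_
  rw [OrthonormalBasis.repr_apply_apply]
  exact inner_eigen_rSpan hf hi (hf.hasEigenvector_eigenvectorBasis rfl i).1 hu

/-! ### Tensor / Kronecker infrastructure -/

variable {m k : ℕ}

/-- elementary tensor -/
noncomputable def tmul (x : EuclideanSpace ℂ (Fin m)) (y : EuclideanSpace ℂ (Fin k)) :
    EuclideanSpace ℂ (Fin m × Fin k) :=
  (WithLp.equiv 2 _).symm (fun p : Fin m × Fin k => x p.1 * y p.2)

lemma tmul_apply (x : EuclideanSpace ℂ (Fin m)) (y : EuclideanSpace ℂ (Fin k))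
    (p : Fin m × Fin k) : tmul x y p = x p.1 * y p.2 := rfl

lemma tmul_smul_left (c : ℂ) (x : EuclideanSpace ℂ (Fin m)) (y : EuclideanSpace ℂ (Fin k)) :
    tmul (c • x) y = c • tmul x y := by
  ext p
  simp [tmul_apply, mul_assoc]

lemma tmul_smul_right (c : ℂ) (x : EuclideanSpace ℂ (Fin m)) (y : EuclideanSpace ℂ (Fin k)) :
    tmul x (c • y) = c • tmul x y := by
  ext p
  simp [tmul_apply]
  ring

/-- `x ↦ x ⊗ y` as a linear map. -/
noncomputable def tmulRight (y : EuclideanSpace ℂ (Fin k)) :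
    EuclideanSpace ℂ (Fin m) →ₗ[ℂ] EuclideanSpace ℂ (Fin m × Fin k) where
  toFun x := tmul x y
  map_add' x x' := by ext p; simp [tmul_apply, add_mul]
  map_smul' c x := by simp [tmul_smul_left]

/-- `y ↦ x ⊗ y` as a linear map. -/
noncomputable def tmulLeft (x : EuclideanSpace ℂ (Fin m)) :
    EuclideanSpace ℂ (Fin k) →ₗ[ℂ] EuclideanSpace ℂ (Fin m × Fin k) where
  toFun y := tmul x y
  map_add' y y' := by ext p; simp [tmul_apply, mul_add]
  map_smul' c y := by simp [tmul_smul_right]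

lemma toEuclideanLin_apply' {ι : Type*} [Fintype ι] [DecidableEq ι]
    (A : Matrix ι ι ℂ) (x : EuclideanSpace ℂ ι)
    (i : ι) : Matrix.toEuclideanLin A x i = A.mulVec x i := by
  rfl

lemma toEuclideanLin_mul {ι : Type*} [Fintype ι] [DecidableEq ι] (A B : Matrix ι ι ℂ) :
    Matrix.toEuclideanLin (A * B) =
      (Matrix.toEuclideanLin A) ∘ₗ (Matrix.toEuclideanLin B) := by
  refine LinearMap.ext fun x => ?_
  ext i
  simp only [LinearMap.comp_apply, toEuclideanLin_apply']
  rw [← Matrix.mulVec_mulVec]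
  rfl

lemma toEuclideanLin_one {ι : Type*} [Fintype ι] [DecidableEq ι] :
    Matrix.toEuclideanLin (1 : Matrix ι ι ℂ) = LinearMap.id := by
  refine LinearMap.ext fun x => ?_
  ext i
  simp only [toEuclideanLin_apply', Matrix.one_mulVec]
  rfl

lemma toEuclideanLin_kronecker_tmul (A : Matrix (Fin m) (Fin m) ℂ)
    (B : Matrix (Fin k) (Fin k) ℂ) (x : EuclideanSpace ℂ (Fin m))
    (y : EuclideanSpace ℂ (Fin k)) :
    Matrix.toEuclideanLin (A ⊗ₖ B) (tmul x y) =
      tmul (Matrix.toEuclideanLin A x) (Matrix.toEuclideanLin B y) := by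
  ext p
  rw [toEuclideanLin_apply', tmul_apply, toEuclideanLin_apply', toEuclideanLin_apply']
  show ∑ q : Fin m × Fin k, (A ⊗ₖ B) p q * (tmul x y) q = _
  rw [Fintype.sum_prod_type]
  show ∑ i, ∑ j, (A p.1 i * B p.2 j) * (x i * y j) = (∑ i, A p.1 i * x i) * (∑ j, B p.2 j * y j)
  rw [Finset.sum_mul_sum]
  refine Finset.sum_congr rfl fun i _ => Finset.sum_congr rfl fun j _ => by ring

lemma sub_kron {l p : ℕ} (A A' : Matrix (Fin l) (Fin l) ℂ) (B : Matrix (Fin p) (Fin p) ℂ) :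
    (A - A') ⊗ₖ B = A ⊗ₖ B - A' ⊗ₖ B := by
  ext pq rs
  simp [Matrix.kroneckerMap_apply, Matrix.sub_apply, sub_mul]

lemma conjT_kron {l p : ℕ} (A : Matrix (Fin l) (Fin l) ℂ) (B : Matrix (Fin p) (Fin p) ℂ) :
    (A ⊗ₖ B).conjTranspose = A.conjTranspose ⊗ₖ B.conjTranspose := by
  ext pq rs
  simp [Matrix.conjTranspose_apply, Matrix.kroneckerMap_apply, mul_comm]

lemma kron_hermitian {l p : ℕ} {A : Matrix (Fin l) (Fin l) ℂ} {B : Matrix (Fin p) (Fin p) ℂ}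
    (hA : A.IsHermitian) (hB : B.IsHermitian) : (A ⊗ₖ B).IsHermitian := by
  show (A ⊗ₖ B).conjTranspose = A ⊗ₖ B
  rw [conjT_kron, hA.eq, hB.eq]

lemma comm_key {R : Type*} [Ring R] [Algebra ℂ R] (A B : R) (hA : A * A = A) (hB : B * B = B)
    (a b : ℂ) (hab : b = 1 - a) :
    ((a • A + b • B) * (a • A + b • B) - (a • A + b • B)) * A
      = A * ((a • A + b • B) * (a • A + b • B) - (a • A + b • B)) := by
  subst hab
  have hAA : ∀ x : R, A * (A * x) = A * x := fun x => by rw [← mul_assoc, hA]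
  have hBB : ∀ x : R, B * (B * x) = B * x := fun x => by rw [← mul_assoc, hB]
  simp only [add_mul, mul_add, sub_mul, mul_sub, smul_mul_assoc, mul_smul_comm, smul_smul,
    mul_assoc, hA, hB, hAA, hBB]
  match_scalars <;> ring

lemma tensor_mono {S S' : Submodule ℂ (EuclideanSpace ℂ (Fin m))}
    {T T' : Submodule ℂ (EuclideanSpace ℂ (Fin k))} (hS : S ≤ S') (hT : T ≤ T') :
    tensorSubmodule S T ≤ tensorSubmodule S' T' := by
  apply Submodule.span_mono
  rintro u ⟨x, hx, y, hy, hu⟩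
  exact ⟨x, hS hx, y, hT hy, hu⟩

lemma tensor_le_rSpan_left (Mm : Matrix (Fin m) (Fin m) ℂ) (s : Set ℝ) :
    tensorSubmodule (eigSpan Mm s) (⊤ : Submodule ℂ (EuclideanSpace ℂ (Fin k)))
      ≤ rSpan (Matrix.toEuclideanLin (Mm ⊗ₖ (1 : Matrix (Fin k) (Fin k) ℂ))) s := by
  rw [tensorSubmodule, Submodule.span_le]
  rintro u ⟨x, hx, y, -, hu⟩
  have hu' : u = tmul x y := by
    ext p; rw [tmul_apply]; exact hu p
  rw [SetLike.mem_coe, hu']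
  have key : eigSpan Mm s ≤ Submodule.comap (tmulRight y)
      (rSpan (Matrix.toEuclideanLin (Mm ⊗ₖ (1 : Matrix (Fin k) (Fin k) ℂ))) s) := by
    refine iSup₂_le fun μ hμ => fun z hz => ?_
    refine mem_rSpan_of_eigen hμ ?_
    rw [Module.End.mem_eigenspace_iff] at hz ⊢
    show Matrix.toEuclideanLin (Mm ⊗ₖ (1 : Matrix (Fin k) (Fin k) ℂ)) (tmul z y)
      = (μ : ℂ) • tmul z y
    rw [toEuclideanLin_kronecker_tmul, hz, toEuclideanLin_one, tmul_smul_left]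
    rfl
  exact key hx

lemma tensor_le_rSpan_right (Nm : Matrix (Fin k) (Fin k) ℂ) (s : Set ℝ) :
    tensorSubmodule (⊤ : Submodule ℂ (EuclideanSpace ℂ (Fin m))) (eigSpan Nm s)
      ≤ rSpan (Matrix.toEuclideanLin ((1 : Matrix (Fin m) (Fin m) ℂ) ⊗ₖ Nm)) s := by
  rw [tensorSubmodule, Submodule.span_le]
  rintro u ⟨x, -, y, hy, hu⟩
  have hu' : u = tmul x y := by
    ext p; rw [tmul_apply]; exact hu p
  rw [SetLike.mem_coe, hu']
  have key : eigSpan Nm s ≤ Submodule.comap (tmulLeft x)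
      (rSpan (Matrix.toEuclideanLin ((1 : Matrix (Fin m) (Fin m) ℂ) ⊗ₖ Nm)) s) := by
    refine iSup₂_le fun μ hμ => fun z hz => ?_
    refine mem_rSpan_of_eigen hμ ?_
    rw [Module.End.mem_eigenspace_iff] at hz ⊢
    show Matrix.toEuclideanLin ((1 : Matrix (Fin m) (Fin m) ℂ) ⊗ₖ Nm) (tmul x z)
      = (μ : ℂ) • tmul x z
    rw [toEuclideanLin_kronecker_tmul, hz, toEuclideanLin_one, tmul_smul_right]
    rfl
  exact key hy

end ICBAux

open ICBAux in
set_option maxHeartbeats 1000000 in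
/-- **Key quantitative step for the identical challenge mode.** -/
theorem identical_challenge_bound
    (m k : ℕ) (hm : 1 ≤ m) (hk : 1 ≤ k)
    (P₀ P₁ : Matrix (Fin m) (Fin m) ℂ) (Q₀ Q₁ : Matrix (Fin k) (Fin k) ℂ)
    (hP₀h : P₀.IsHermitian) (hP₀i : P₀ * P₀ = P₀)
    (hP₁h : P₁.IsHermitian) (hP₁i : P₁ * P₁ = P₁)
    (hQ₀h : Q₀.IsHermitian) (hQ₀i : Q₀ * Q₀ = Q₀)
    (hQ₁h : Q₁.IsHermitian) (hQ₁i : Q₁ * Q₁ = Q₁)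
    (w ε : ℝ) (hw : w ∈ Set.Icc (0 : ℝ) 1) (hε : 0 < ε)
    (v vB vC : EuclideanSpace ℂ (Fin m × Fin k))
    (hv : ‖v‖ = 1)
    (hsplit : v = vB + vC)
    (hvB : vB ∈ tensorSubmodule
      (eigSpan ((w : ℂ) • P₀ + ((1 - w : ℝ) : ℂ) • P₁) {μ : ℝ | |μ - 1/2| ≤ |w - 1/2| + ε})
      (⊤ : Submodule ℂ (EuclideanSpace ℂ (Fin k))))
    (hvC : vC ∈ tensorSubmodule
      (eigSpan ((w : ℂ) • P₀ + ((1 - w : ℝ) : ℂ) • P₁) {μ : ℝ | |μ - 1/2| > |w - 1/2| + ε})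
      (eigSpan ((w : ℂ) • Q₀ + ((1 - w : ℝ) : ℂ) • Q₁) {μ : ℝ | |μ - 1/2| ≤ |w - 1/2| + ε})) :
    w * ‖Matrix.toEuclideanLin (P₀ ⊗ₖ Q₀) v‖ ^ 2
      + (1 - w) * ‖Matrix.toEuclideanLin (P₁ ⊗ₖ Q₁) v‖ ^ 2
      ≤ max w (1 - w) + ε := by
  classical
  obtain ⟨hw0, hw1⟩ := hw
  set c₀ : ℝ := |w - 1/2| + ε with hc₀def
  have hc₀pos : 0 < c₀ := by positivity
  set Mm : Matrix (Fin m) (Fin m) ℂ := (w : ℂ) • P₀ + ((1 - w : ℝ) : ℂ) • P₁ with hMm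
  set Nm : Matrix (Fin k) (Fin k) ℂ := (w : ℂ) • Q₀ + ((1 - w : ℝ) : ℂ) • Q₁ with hNm
  -- Hermitian facts
  have hsmulherm : ∀ {l : ℕ} (r : ℝ) {A : Matrix (Fin l) (Fin l) ℂ}, A.IsHermitian →
      ((r : ℂ) • A).IsHermitian := by
    intro l r A hA
    show ((r : ℂ) • A).conjTranspose = (r : ℂ) • A
    rw [Matrix.conjTranspose_smul, hA.eq, Complex.star_def, Complex.conj_ofReal]
  have hMmh : Mm.IsHermitian := by
    rw [hMm]; exact (hsmulherm w hP₀h).add (hsmulherm (1 - w) hP₁h)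
  have hNmh : Nm.IsHermitian := by
    rw [hNm]; exact (hsmulherm w hQ₀h).add (hsmulherm (1 - w) hQ₁h)
  have hfMsym : (Matrix.toEuclideanLin (Mm ⊗ₖ (1 : Matrix (Fin k) (Fin k) ℂ))).IsSymmetric :=
    Matrix.isHermitian_iff_isSymmetric.mp (kron_hermitian hMmh Matrix.isHermitian_one)
  have hgNsym : (Matrix.toEuclideanLin ((1 : Matrix (Fin m) (Fin m) ℂ) ⊗ₖ Nm)).IsSymmetric :=
    Matrix.isHermitian_iff_isSymmetric.mp (kron_hermitian Matrix.isHermitian_one hNmh)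
  -- projections: quadratic form equals norm squared
  have hproj : ∀ (A : Matrix (Fin m) (Fin m) ℂ) (B : Matrix (Fin k) (Fin k) ℂ),
      A.IsHermitian → B.IsHermitian → A * A = A → B * B = B →
      ∀ u : EuclideanSpace ℂ (Fin m × Fin k),
        (inner ℂ u (Matrix.toEuclideanLin (A ⊗ₖ B) u) : ℂ).re
          = ‖Matrix.toEuclideanLin (A ⊗ₖ B) u‖ ^ 2 := by
    intro A B hA hB hAi hBi u
    apply proj_inner_re
    · exact Matrix.isHermitian_iff_isSymmetric.mp (kron_hermitian hA hB)
    · rw [← toEuclideanLin_mul, ← Matrix.mul_kronecker_mul, hAi, hBi]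
  have hcomplidem : ∀ {l : ℕ} (Q : Matrix (Fin l) (Fin l) ℂ), Q * Q = Q →
      (1 - Q) * (1 - Q) = (1 - Q) := by
    intro l Q hQ
    rw [mul_sub, mul_one, sub_mul, one_mul, hQ, sub_self, sub_zero]
  -- membership in spectral subspaces
  have hvB1 : vB ∈ rSpan (Matrix.toEuclideanLin (Mm ⊗ₖ (1 : Matrix (Fin k) (Fin k) ℂ)))
      {μ : ℝ | |μ - 1/2| ≤ c₀} := tensor_le_rSpan_left Mm _ hvB
  have hvC1 : vC ∈ rSpan (Matrix.toEuclideanLin (Mm ⊗ₖ (1 : Matrix (Fin k) (Fin k) ℂ)))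
      {μ : ℝ | |μ - 1/2| > c₀} :=
    tensor_le_rSpan_left Mm _ (tensor_mono le_rfl le_top hvC)
  have hvC2 : vC ∈ rSpan (Matrix.toEuclideanLin ((1 : Matrix (Fin m) (Fin m) ℂ) ⊗ₖ Nm))
      {μ : ℝ | |μ - 1/2| ≤ c₀} :=
    tensor_le_rSpan_right Nm _ (tensor_mono le_top le_rfl hvC)
  -- disjointness
  have hdisjNF : ∀ μ ∈ {μ : ℝ | |μ - 1/2| ≤ c₀}, μ ∉ {μ : ℝ | |μ - 1/2| > c₀} := by
    intro μ hμ hμ'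
    simp only [Set.mem_setOf_eq] at hμ hμ'
    linarith
  have hdisjFN : ∀ μ ∈ {μ : ℝ | |μ - 1/2| > c₀}, μ ∉ {μ : ℝ | |μ - 1/2| ≤ c₀} := by
    intro μ hμ hμ'
    simp only [Set.mem_setOf_eq] at hμ hμ'
    linarith
  -- the auxiliary operator K = f² - f and invariance
  set φ : ℝ → ℝ := fun μ => μ * μ - μ with hφ
  set KM := (Matrix.toEuclideanLin (Mm ⊗ₖ (1 : Matrix (Fin k) (Fin k) ℂ)))
      ∘ₗ (Matrix.toEuclideanLin (Mm ⊗ₖ (1 : Matrix (Fin k) (Fin k) ℂ)))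
      - (Matrix.toEuclideanLin (Mm ⊗ₖ (1 : Matrix (Fin k) (Fin k) ℂ))) with hKM
  have hKMsym : KM.IsSymmetric := (isSymmetric_comp hfMsym).sub hfMsym
  have heig : ∀ (μ : ℝ),
      Module.End.eigenspace (Matrix.toEuclideanLin (Mm ⊗ₖ (1 : Matrix (Fin k) (Fin k) ℂ))) (μ : ℂ)
        ≤ Module.End.eigenspace KM ((φ μ : ℝ) : ℂ) := by
    intro μ x hx
    rw [Module.End.mem_eigenspace_iff] at hx ⊢
    have hcast : ((φ μ : ℝ) : ℂ) = (μ : ℂ) * (μ : ℂ) - (μ : ℂ) := by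
      rw [hφ]; push_cast; ring
    rw [hKM]
    simp only [LinearMap.sub_apply, LinearMap.comp_apply]
    rw [hx, map_smul, hx, hcast, smul_smul, ← sub_smul]
  have hKMmat : KM = Matrix.toEuclideanLin ((Mm * Mm - Mm) ⊗ₖ (1 : Matrix (Fin k) (Fin k) ℂ)) := by
    have h1 : (Mm * Mm - Mm) ⊗ₖ (1 : Matrix (Fin k) (Fin k) ℂ)
        = (Mm ⊗ₖ (1 : Matrix (Fin k) (Fin k) ℂ)) * (Mm ⊗ₖ (1 : Matrix (Fin k) (Fin k) ℂ))
          - Mm ⊗ₖ (1 : Matrix (Fin k) (Fin k) ℂ) := by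
      rw [sub_kron, ← Matrix.mul_kronecker_mul, one_mul]
    rw [hKM, h1, map_sub, toEuclideanLin_mul]
  have hmat₀ : (Mm * Mm - Mm) * P₀ = P₀ * (Mm * Mm - Mm) := by
    rw [hMm]
    exact comm_key P₀ P₁ hP₀i hP₁i (w : ℂ) ((1 - w : ℝ) : ℂ) (by push_cast; ring)
  have hmat₁ : (Mm * Mm - Mm) * P₁ = P₁ * (Mm * Mm - Mm) := by
    rw [hMm, add_comm ((w : ℂ) • P₀) (((1 - w : ℝ) : ℂ) • P₁)]
    exact comm_key P₁ P₀ hP₁i hP₀i ((1 - w : ℝ) : ℂ) (w : ℂ) (by push_cast; ring)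
  have hcommT : ∀ (Pb : Matrix (Fin m) (Fin m) ℂ) (Qb : Matrix (Fin k) (Fin k) ℂ),
      (Mm * Mm - Mm) * Pb = Pb * (Mm * Mm - Mm) →
      KM ∘ₗ Matrix.toEuclideanLin (Pb ⊗ₖ Qb) = Matrix.toEuclideanLin (Pb ⊗ₖ Qb) ∘ₗ KM := by
    intro Pb Qb hmatM
    rw [hKMmat, ← toEuclideanLin_mul, ← toEuclideanLin_mul]
    congr 1
    rw [← Matrix.mul_kronecker_mul, ← Matrix.mul_kronecker_mul, hmatM, one_mul, mul_one]
  -- set identifications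
  have habs : ∀ μ : ℝ, (|μ - 1/2| ≤ c₀ ↔ μ * μ - μ ≤ c₀ ^ 2 - 1/4) := by
    intro μ
    have hexpand : (μ - 1/2) ^ 2 = μ * μ - μ + 1/4 := by ring
    constructor
    · intro h
      obtain ⟨ha, hb⟩ := abs_le.mp h
      have h2 : (μ - 1/2) ^ 2 ≤ c₀ ^ 2 := sq_le_sq' (by linarith) hb
      linarith
    · intro h
      have h2 : (μ - 1/2) ^ 2 ≤ c₀ ^ 2 := by linarith
      exact abs_le_of_sq_le_sq h2 hc₀pos.le
  have hsnear_eq : {μ : ℝ | |μ - 1/2| ≤ c₀} = φ ⁻¹' {κ : ℝ | κ ≤ c₀ ^ 2 - 1/4} := by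
    ext μ
    simp only [Set.mem_setOf_eq, Set.mem_preimage, hφ]
    exact habs μ
  have hsfar_eq : {μ : ℝ | |μ - 1/2| > c₀} = φ ⁻¹' {κ : ℝ | κ > c₀ ^ 2 - 1/4} := by
    ext μ
    simp only [Set.mem_setOf_eq, Set.mem_preimage, hφ]
    exact lt_iff_lt_of_le_iff_le (habs μ)
  have hnear_eq : rSpan (Matrix.toEuclideanLin (Mm ⊗ₖ (1 : Matrix (Fin k) (Fin k) ℂ)))
      {μ : ℝ | |μ - 1/2| ≤ c₀} = rSpan KM {κ : ℝ | κ ≤ c₀ ^ 2 - 1/4} := by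
    rw [hsnear_eq]
    exact rSpan_eq_rSpan hfMsym hKMsym φ heig _
  have hfar_eq : rSpan (Matrix.toEuclideanLin (Mm ⊗ₖ (1 : Matrix (Fin k) (Fin k) ℂ)))
      {μ : ℝ | |μ - 1/2| > c₀} = rSpan KM {κ : ℝ | κ > c₀ ^ 2 - 1/4} := by
    rw [hsfar_eq]
    exact rSpan_eq_rSpan hfMsym hKMsym φ heig _
  -- invariance of near/far spaces under the projections
  have hpres : ∀ (Pb : Matrix (Fin m) (Fin m) ℂ) (Qb : Matrix (Fin k) (Fin k) ℂ),
      (Mm * Mm - Mm) * Pb = Pb * (Mm * Mm - Mm) →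
      (Matrix.toEuclideanLin (Pb ⊗ₖ Qb) vB
          ∈ rSpan (Matrix.toEuclideanLin (Mm ⊗ₖ (1 : Matrix (Fin k) (Fin k) ℂ)))
            {μ : ℝ | |μ - 1/2| ≤ c₀})
      ∧ (Matrix.toEuclideanLin (Pb ⊗ₖ Qb) vC
          ∈ rSpan (Matrix.toEuclideanLin (Mm ⊗ₖ (1 : Matrix (Fin k) (Fin k) ℂ)))
            {μ : ℝ | |μ - 1/2| > c₀}) := by
    intro Pb Qb hPb
    have hcm := hcommT Pb Qb hPb
    clear hPb
    constructor
    · rw [hnear_eq]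
      rw [hnear_eq] at hvB1
      exact rSpan_mapsTo hcm _ hvB1
    · rw [hfar_eq]
      rw [hfar_eq] at hvC1
      exact rSpan_mapsTo hcm _ hvC1
  -- cross terms vanish
  have hexp : ∀ (Pb : Matrix (Fin m) (Fin m) ℂ) (Qb : Matrix (Fin k) (Fin k) ℂ),
      (Mm * Mm - Mm) * Pb = Pb * (Mm * Mm - Mm) →
      (inner ℂ v (Matrix.toEuclideanLin (Pb ⊗ₖ Qb) v) : ℂ).re
        = (inner ℂ vB (Matrix.toEuclideanLin (Pb ⊗ₖ Qb) vB) : ℂ).re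
          + (inner ℂ vC (Matrix.toEuclideanLin (Pb ⊗ₖ Qb) vC) : ℂ).re := by
    intro Pb Qb hPb
    obtain ⟨hB, hC⟩ := hpres Pb Qb hPb
    have h1 : inner ℂ vB (Matrix.toEuclideanLin (Pb ⊗ₖ Qb) vC) = (0 : ℂ) :=
      inner_rSpan_rSpan hfMsym hdisjNF hvB1 hC
    have h2 : inner ℂ vC (Matrix.toEuclideanLin (Pb ⊗ₖ Qb) vB) = (0 : ℂ) :=
      inner_rSpan_rSpan hfMsym hdisjFN hvC1 hB
    rw [hsplit, map_add, inner_add_left, inner_add_right, inner_add_right, h1, h2]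
    simp [Complex.add_re]
  -- orthogonality of vB and vC, norm splitting
  have hBC0 : inner ℂ vB vC = (0 : ℂ) := inner_rSpan_rSpan hfMsym hdisjNF hvB1 hvC1
  have hnormsum : ‖vB‖ ^ 2 + ‖vC‖ ^ 2 = 1 := by
    have h := norm_add_sq (𝕜 := ℂ) vB vC
    rw [← hsplit, hv] at h
    have h0 : RCLike.re (inner ℂ vB vC : ℂ) = 0 := by rw [hBC0]; simp
    rw [h0] at h
    norm_num at h
    linarith
  -- decomposition identities
  have hkronsplitM : Mm ⊗ₖ (1 : Matrix (Fin k) (Fin k) ℂ)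
      = ((w : ℂ) • (P₀ ⊗ₖ Q₀) + ((1 - w : ℝ) : ℂ) • (P₁ ⊗ₖ Q₁))
        + ((w : ℂ) • (P₀ ⊗ₖ (1 - Q₀)) + ((1 - w : ℝ) : ℂ) • (P₁ ⊗ₖ (1 - Q₁))) := by
    have h0 : ∀ (A : Matrix (Fin m) (Fin m) ℂ) (B : Matrix (Fin k) (Fin k) ℂ),
        A ⊗ₖ (1 : Matrix (Fin k) (Fin k) ℂ) = A ⊗ₖ B + A ⊗ₖ (1 - B) := by
      intro A B
      have hBB : B + (1 - B) = (1 : Matrix (Fin k) (Fin k) ℂ) := by abel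
      conv_lhs => rw [← hBB]
      rw [Matrix.kronecker_add]
    rw [hMm, Matrix.add_kronecker, Matrix.smul_kronecker, Matrix.smul_kronecker,
      h0 P₀ Q₀, h0 P₁ Q₁, smul_add, smul_add]
    abel
  have hkronsplitN : (1 : Matrix (Fin m) (Fin m) ℂ) ⊗ₖ Nm
      = ((w : ℂ) • (P₀ ⊗ₖ Q₀) + ((1 - w : ℝ) : ℂ) • (P₁ ⊗ₖ Q₁))
        + ((w : ℂ) • ((1 - P₀) ⊗ₖ Q₀) + ((1 - w : ℝ) : ℂ) • ((1 - P₁) ⊗ₖ Q₁)) := by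
    have h0 : ∀ (A : Matrix (Fin m) (Fin m) ℂ) (B : Matrix (Fin k) (Fin k) ℂ),
        (1 : Matrix (Fin m) (Fin m) ℂ) ⊗ₖ B = A ⊗ₖ B + (1 - A) ⊗ₖ B := by
      intro A B
      have hAA : A + (1 - A) = (1 : Matrix (Fin m) (Fin m) ℂ) := by abel
      conv_lhs => rw [← hAA]
      rw [Matrix.add_kronecker]
    rw [hNm, Matrix.kronecker_add, Matrix.kronecker_smul, Matrix.kronecker_smul,
      h0 P₀ Q₀, h0 P₁ Q₁, smul_add, smul_add]
    abel
  -- real part expansion of the quadratic form of a 4-term combination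
  have hware : ∀ (X Y X' Y' : Matrix (Fin m × Fin k) (Fin m × Fin k) ℂ)
      (u : EuclideanSpace ℂ (Fin m × Fin k)),
      (inner ℂ u (Matrix.toEuclideanLin
          (((w : ℂ) • X + ((1 - w : ℝ) : ℂ) • Y) + ((w : ℂ) • X' + ((1 - w : ℝ) : ℂ) • Y')) u) : ℂ).re
        = w * (inner ℂ u (Matrix.toEuclideanLin X u) : ℂ).re
          + (1 - w) * (inner ℂ u (Matrix.toEuclideanLin Y u) : ℂ).re
          + (w * (inner ℂ u (Matrix.toEuclideanLin X' u) : ℂ).re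
            + (1 - w) * (inner ℂ u (Matrix.toEuclideanLin Y' u) : ℂ).re) := by
    intro X Y X' Y' u
    rw [map_add, map_add, map_add, map_smul, map_smul, map_smul, map_smul]
    simp only [LinearMap.add_apply, LinearMap.smul_apply]
    rw [inner_add_right, inner_add_right, inner_add_right, inner_smul_right, inner_smul_right,
      inner_smul_right, inner_smul_right, Complex.add_re, Complex.add_re, Complex.add_re,
      re_ofReal_mul, re_ofReal_mul, re_ofReal_mul, re_ofReal_mul]
  -- comparison with M ⊗ 1 on an arbitrary vector
  have hcmpB : ∀ u : EuclideanSpace ℂ (Fin m × Fin k),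
      w * (inner ℂ u (Matrix.toEuclideanLin (P₀ ⊗ₖ Q₀) u) : ℂ).re
        + (1 - w) * (inner ℂ u (Matrix.toEuclideanLin (P₁ ⊗ₖ Q₁) u) : ℂ).re
      ≤ (inner ℂ u (Matrix.toEuclideanLin (Mm ⊗ₖ (1 : Matrix (Fin k) (Fin k) ℂ)) u) : ℂ).re := by
    intro u
    rw [hkronsplitM, hware]
    have e0 := hproj P₀ (1 - Q₀) hP₀h (Matrix.isHermitian_one.sub hQ₀h) hP₀i (hcomplidem Q₀ hQ₀i) u
    have e1 := hproj P₁ (1 - Q₁) hP₁h (Matrix.isHermitian_one.sub hQ₁h) hP₁i (hcomplidem Q₁ hQ₁i) u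
    have n0 : 0 ≤ w * (inner ℂ u (Matrix.toEuclideanLin (P₀ ⊗ₖ (1 - Q₀)) u) : ℂ).re := by
      rw [e0]; positivity
    have n1 : 0 ≤ (1 - w) * (inner ℂ u (Matrix.toEuclideanLin (P₁ ⊗ₖ (1 - Q₁)) u) : ℂ).re := by
      rw [e1]
      have : (0:ℝ) ≤ 1 - w := by linarith
      positivity
    linarith
  have hcmpC : ∀ u : EuclideanSpace ℂ (Fin m × Fin k),
      w * (inner ℂ u (Matrix.toEuclideanLin (P₀ ⊗ₖ Q₀) u) : ℂ).re
        + (1 - w) * (inner ℂ u (Matrix.toEuclideanLin (P₁ ⊗ₖ Q₁) u) : ℂ).re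
      ≤ (inner ℂ u (Matrix.toEuclideanLin ((1 : Matrix (Fin m) (Fin m) ℂ) ⊗ₖ Nm) u) : ℂ).re := by
    intro u
    rw [hkronsplitN, hware]
    have e0 := hproj (1 - P₀) Q₀ (Matrix.isHermitian_one.sub hP₀h) hQ₀h (hcomplidem P₀ hP₀i) hQ₀i u
    have e1 := hproj (1 - P₁) Q₁ (Matrix.isHermitian_one.sub hP₁h) hQ₁h (hcomplidem P₁ hP₁i) hQ₁i u
    have n0 : 0 ≤ w * (inner ℂ u (Matrix.toEuclideanLin ((1 - P₀) ⊗ₖ Q₀) u) : ℂ).re := by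
      rw [e0]; positivity
    have n1 : 0 ≤ (1 - w) * (inner ℂ u (Matrix.toEuclideanLin ((1 - P₁) ⊗ₖ Q₁) u) : ℂ).re := by
      rw [e1]
      have : (0:ℝ) ≤ 1 - w := by linarith
      positivity
    linarith
  -- eigenvalue bound on the near sets
  have hmax : max w (1 - w) = 1/2 + |w - 1/2| := by
    rcases abs_cases (w - 1/2) with ⟨h1, h2⟩ | ⟨h1, h2⟩ <;> rw [h1]
    · rw [max_eq_left (by linarith)]; ring
    · rw [max_eq_right (by linarith)]; ring
  have hbound_near : ∀ μ ∈ {μ : ℝ | |μ - 1/2| ≤ c₀}, μ ≤ max w (1 - w) + ε := by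
    intro μ hμ
    simp only [Set.mem_setOf_eq] at hμ
    have := le_abs_self (μ - 1/2)
    rw [hmax, hc₀def] at *
    linarith
  -- quadratic bounds
  have hquadB : (inner ℂ vB (Matrix.toEuclideanLin (Mm ⊗ₖ (1 : Matrix (Fin k) (Fin k) ℂ)) vB) : ℂ).re
      ≤ (max w (1 - w) + ε) * ‖vB‖ ^ 2 := quad_bound hfMsym hbound_near hvB1
  have hquadC : (inner ℂ vC (Matrix.toEuclideanLin ((1 : Matrix (Fin m) (Fin m) ℂ) ⊗ₖ Nm) vC) : ℂ).re
      ≤ (max w (1 - w) + ε) * ‖vC‖ ^ 2 := quad_bound hgNsym hbound_near hvC2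
  -- final assembly
  have hgoal0 : ‖Matrix.toEuclideanLin (P₀ ⊗ₖ Q₀) v‖ ^ 2
      = (inner ℂ v (Matrix.toEuclideanLin (P₀ ⊗ₖ Q₀) v) : ℂ).re :=
    (hproj P₀ Q₀ hP₀h hQ₀h hP₀i hQ₀i v).symm
  have hgoal1 : ‖Matrix.toEuclideanLin (P₁ ⊗ₖ Q₁) v‖ ^ 2
      = (inner ℂ v (Matrix.toEuclideanLin (P₁ ⊗ₖ Q₁) v) : ℂ).re :=
    (hproj P₁ Q₁ hP₁h hQ₁h hP₁i hQ₁i v).symm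
  rw [hgoal0, hgoal1, hexp P₀ Q₀ hmat₀, hexp P₁ Q₁ hmat₁]
  have hBpart := le_trans (hcmpB vB) hquadB
  have hCpart := le_trans (hcmpC vC) hquadC
  have hsum : (max w (1 - w) + ε) * ‖vB‖ ^ 2 + (max w (1 - w) + ε) * ‖vC‖ ^ 2
      = max w (1 - w) + ε := by
    rw [← mul_add, hnormsum, mul_one]
  linarith [hBpart, hCpart]
end

section
/- Let A be a linear subspace of F₂ⁿ and let s, s', t, t' ∈ F₂ⁿ. Then: (a) the coset state |A_{s,s'}⟩ is a unit vector in ℂ^{F₂ⁿ}; (b) if A + s ≠ A + t or A^⊥ + s' ≠ A^⊥ + t', then ⟨|A_{s,s'}⟩, |A_{t,t'}⟩⟩ = 0; and (c) if R ⊆ F₂ⁿ is a set containing exactly one representative of each coset of A and R' ⊆ F₂ⁿ is a set containing exactly one representative of each coset of A^⊥, then the family (|A_{s,s'}⟩)_{s ∈ R, s' ∈ R'} is an orthonormal basis of ℂ^{F₂ⁿ}. -/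
open scoped Classical InnerProductSpace

/-- The vector space `F₂ⁿ`. -/
abbrev F2n (n : ℕ) := Fin n → ZMod 2

/-- The `F₂`-bilinear form `⟨x, y⟩ = Σᵢ xᵢ yᵢ` on `F₂ⁿ`. -/
def bform {n : ℕ} (x y : F2n n) : ZMod 2 := ∑ i, x i * y i

/-- The sign `(−1)^b ∈ ℂ` attached to `b ∈ F₂`. -/
def sgn (b : ZMod 2) : ℂ := (-1 : ℂ) ^ b.val

/-- The dual subspace `A^⊥ = {b | ⟨a, b⟩ = 0 for all a ∈ A}`. -/
def dualSub {n : ℕ} (A : Submodule (ZMod 2) (F2n n)) : Submodule (ZMod 2) (F2n n) where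
  carrier := {b | ∀ a ∈ A, bform a b = 0}
  add_mem' := by
    intro b c hb hc a ha
    have h : bform a (b + c) = bform a b + bform a c := by
      simp [bform, Pi.add_apply, mul_add, Finset.sum_add_distrib]
    simp only [Set.mem_setOf_eq] at hb hc ⊢
    rw [h, hb a ha, hc a ha, add_zero]
  zero_mem' := by
    intro a _
    simp [bform]
  smul_mem' := by
    intro c x hx a ha
    have h : bform a (c • x) = c * bform a x := by
      simp only [bform, Finset.mul_sum, Pi.smul_apply, smul_eq_mul]
      exact Finset.sum_congr rfl fun i _ => by ring
    simp only [Set.mem_setOf_eq] at hx ⊢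
    rw [h, hx a ha, mul_zero]

/-- The coset `A + s` of a subspace `A ≤ F₂ⁿ`. -/
def coset {n : ℕ} (A : Submodule (ZMod 2) (F2n n)) (s : F2n n) : Set (F2n n) :=
  (fun a => a + s) '' (A : Set (F2n n))

/-- The coset state `|A_{s,s'}⟩ = |A|^{−1/2} Σ_{a ∈ A} (−1)^{⟨s',a⟩} e_{a+s}`. -/
noncomputable def cosetState (n : ℕ) (A : Submodule (ZMod 2) (F2n n)) (s s' : F2n n) :
    EuclideanSpace ℂ (F2n n) :=
  ((Real.sqrt (Nat.card A) : ℂ))⁻¹ •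
    ∑ a ∈ (A : Set (F2n n)).toFinset,
      sgn (bform s' a) • EuclideanSpace.single (a + s) (1 : ℂ)


lemma F2n.add_self {n : ℕ} (x : F2n n) : x + x = 0 := by
  funext i; simp [CharTwo.add_self_eq_zero]

lemma F2n.sub_eq_add {n : ℕ} (x y : F2n n) : x - y = x + y := by
  funext i; simp [sub_eq_add_neg, CharTwo.neg_eq]

lemma sgn_add (a b : ZMod 2) : sgn (a + b) = sgn a * sgn b := by
  unfold sgn
  rw [ZMod.val_add, ← pow_add, ← neg_one_pow_eq_pow_mod_two]

lemma sgn_zero : sgn 0 = 1 := by simp [sgn]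

lemma conj_sgn (b : ZMod 2) : (starRingEnd ℂ) (sgn b) = sgn b := by
  fin_cases b <;> simp [sgn]

lemma bform_comm {n : ℕ} (x y : F2n n) : bform x y = bform y x := by
  simp [bform, mul_comm]

lemma bform_add_left {n : ℕ} (x y z : F2n n) : bform (x + y) z = bform x z + bform y z := by
  simp [bform, add_mul, Finset.sum_add_distrib]

lemma bform_add_right {n : ℕ} (x y z : F2n n) : bform x (y + z) = bform x y + bform x z := by
  simp [bform, mul_add, Finset.sum_add_distrib]

lemma bform_zero_right {n : ℕ} (x : F2n n) : bform x 0 = 0 := by simp [bform]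

lemma mem_dualSub {n : ℕ} {A : Submodule (ZMod 2) (F2n n)} {y : F2n n} :
    y ∈ dualSub A ↔ ∀ a ∈ A, bform a y = 0 := Iff.rfl

lemma card_A_pos {n : ℕ} (A : Submodule (ZMod 2) (F2n n)) : 0 < Nat.card A :=
  Nat.card_pos

lemma toFinset_card_eq {n : ℕ} (A : Submodule (ZMod 2) (F2n n)) :
    (A : Set (F2n n)).toFinset.card = Nat.card A := by
  simp [Set.toFinset_card, Nat.card_eq_fintype_card]

lemma sum_sgn {n : ℕ} (A : Submodule (ZMod 2) (F2n n)) (y : F2n n) :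
    ∑ a ∈ (A : Set (F2n n)).toFinset, sgn (bform y a) =
      if y ∈ dualSub A then (Nat.card A : ℂ) else 0 := by
  split_ifs with hy
  · rw [Finset.sum_congr rfl (fun a ha => ?_), Finset.sum_const, toFinset_card_eq,
      nsmul_eq_mul, mul_one]
    rw [Set.mem_toFinset] at ha
    rw [bform_comm, hy a ha, sgn_zero]
  · obtain ⟨a₀, ha₀A, ha₀⟩ : ∃ a ∈ A, bform a y ≠ 0 := by
      by_contra h; push_neg at h; exact hy h
    have hval : bform y a₀ = 1 := by
      rw [bform_comm]
      revert ha₀; generalize bform a₀ y = b; intro hb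
      revert b; decide
    set S := ∑ a ∈ (A : Set (F2n n)).toFinset, sgn (bform y a) with hS
    have hshift : S = ∑ a ∈ (A : Set (F2n n)).toFinset, sgn (bform y (a + a₀)) := by
      rw [hS]
      refine Finset.sum_equiv (Equiv.addRight a₀) (fun a => ?_) (fun a _ => rfl) |>.symm
      simp only [Set.mem_toFinset, Equiv.coe_addRight, SetLike.mem_coe]
      constructor
      · intro h; exact A.add_mem h ha₀A
      · intro h
        have := A.add_mem h ha₀A
        rwa [add_assoc, F2n.add_self, add_zero] at this
    have h1 : sgn 1 = -1 := by norm_num [sgn, show ZMod.val (1:ZMod 2) = 1 from rfl]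
    have : S = -S := by
      calc S = ∑ a ∈ (A : Set (F2n n)).toFinset, sgn (bform y (a + a₀)) := hshift
        _ = ∑ a ∈ (A : Set (F2n n)).toFinset, sgn (bform y a) * (-1) := by
            simp only [bform_add_right, sgn_add, hval, h1]
        _ = -S := by rw [← Finset.sum_mul, mul_neg_one]
    have h2 : S + S = 0 := by linear_combination this
    have := add_self_eq_zero.mp h2
    exact this

lemma coset_eq_iff {n : ℕ} (A : Submodule (ZMod 2) (F2n n)) (s t : F2n n) :
    coset A s = coset A t ↔ s + t ∈ A := by
  constructor
  · intro h
    have hs : s ∈ coset A s := ⟨0, A.zero_mem, by simp⟩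
    rw [h] at hs
    obtain ⟨a, ha, hat⟩ := hs
    rw [SetLike.mem_coe] at ha
    have : s + t = a := by
      rw [← hat]; rw [add_assoc, F2n.add_self, add_zero]
    rw [this]; exact ha
  · intro h
    ext x
    simp only [coset, Set.mem_image, SetLike.mem_coe]
    constructor
    · rintro ⟨a, ha, rfl⟩
      exact ⟨a + (s + t), A.add_mem ha h, by rw [add_assoc, add_assoc, F2n.add_self, add_zero]⟩
    · rintro ⟨a, ha, rfl⟩
      refine ⟨a + (s + t), A.add_mem ha h, ?_⟩
      rw [add_assoc]
      rw [show s + t + s = t by rw [add_comm s t, add_assoc, F2n.add_self, add_zero]]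

lemma inner_sum_single {ι : Type*} [Fintype ι] [DecidableEq ι] (F G : Finset ι)
    (f g : ι → ℂ) (p q : ι → ι) :
    ⟪(∑ a ∈ F, f a • EuclideanSpace.single (p a) (1:ℂ)),
      ∑ b ∈ G, g b • EuclideanSpace.single (q b) (1:ℂ)⟫_ℂ
     = ∑ a ∈ F, ∑ b ∈ G, (if p a = q b then (starRingEnd ℂ) (f a) * g b else 0) := by
  rw [sum_inner]
  refine Finset.sum_congr rfl fun a _ => ?_
  rw [inner_sum]
  refine Finset.sum_congr rfl fun b _ => ?_
  rw [inner_smul_left, inner_smul_right, EuclideanSpace.inner_single_left, map_one, one_mul,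
    EuclideanSpace.single_apply]
  split_ifs <;> ring

lemma inner_cosetState (n : ℕ) (A : Submodule (ZMod 2) (F2n n)) (s s' t t' : F2n n) :
    ⟪cosetState n A s s', cosetState n A t t'⟫_ℂ =
      if s + t ∈ A ∧ s' + t' ∈ dualSub A then sgn (bform t' (s + t)) else 0 := by
  set F := (A : Set (F2n n)).toFinset with hF
  have hNpos : 0 < Nat.card A := card_A_pos A
  have hN0 : ((Nat.card A : ℝ)) ≠ 0 := by positivity
  have hstep : ⟪cosetState n A s s', cosetState n A t t'⟫_ℂ =
      ((Nat.card A : ℂ))⁻¹ * ∑ a ∈ F, ∑ b ∈ F,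
        (if a + s = b + t then sgn (bform s' a) * sgn (bform t' b) else 0) := by
    rw [cosetState, cosetState, inner_smul_left, inner_smul_right, inner_sum_single]
    have hsq : (starRingEnd ℂ) ((Real.sqrt (Nat.card A) : ℂ))⁻¹ * ((Real.sqrt (Nat.card A) : ℂ))⁻¹
        = ((Nat.card A : ℂ))⁻¹ := by
      rw [map_inv₀, Complex.conj_ofReal, ← mul_inv, ← Complex.ofReal_mul,
        Real.mul_self_sqrt (by positivity)]
      norm_num
    rw [← mul_assoc, hsq]
    simp_rw [conj_sgn]
    rfl
  rw [hstep]
  by_cases hst : s + t ∈ A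
  · have hcond : ∀ a b : F2n n, (a + s = b + t) ↔ (b = a + (s + t)) := by
      intro a b
      constructor
      · intro h
        have h2 : b + t + t = a + s + t := by rw [h]
        rw [add_assoc, add_assoc, F2n.add_self, add_zero] at h2
        exact h2
      · rintro rfl
        rw [add_assoc a (s+t) t, add_assoc s t t, F2n.add_self, add_zero]
    have hinner : ∀ a ∈ F, ∑ b ∈ F,
        (if a + s = b + t then sgn (bform s' a) * sgn (bform t' b) else 0)
        = sgn (bform s' a) * sgn (bform t' (a + (s + t))) := by
      intro a ha
      rw [Set.mem_toFinset] at ha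
      have : ∀ b ∈ F, (if a + s = b + t then sgn (bform s' a) * sgn (bform t' b) else 0)
          = (if b = a + (s + t) then sgn (bform s' a) * sgn (bform t' b) else 0) := by
        intro b _
        simp only [hcond a b]
      rw [Finset.sum_congr rfl this, Finset.sum_ite_eq' F (a + (s+t))]
      rw [if_pos (by rw [Set.mem_toFinset]; exact A.add_mem ha hst)]
    rw [Finset.sum_congr rfl hinner]
    have hsimp : ∀ a : F2n n, sgn (bform s' a) * sgn (bform t' (a + (s + t)))
        = sgn (bform (s' + t') a) * sgn (bform t' (s + t)) := by
      intro a
      rw [bform_add_right, sgn_add, bform_add_left, sgn_add, bform_comm s' a, bform_comm t' a]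
      ring
    simp_rw [hsimp]
    rw [← Finset.sum_mul, sum_sgn]
    have hN0C : ((Nat.card A : ℂ)) ≠ 0 := by exact_mod_cast Nat.cast_injective.ne_iff.mpr hNpos.ne'
    by_cases hd : s' + t' ∈ dualSub A
    · rw [if_pos hd, if_pos ⟨hst, hd⟩, ← mul_assoc, inv_mul_cancel₀ hN0C, one_mul]
    · rw [if_neg hd, if_neg (fun hc => hd hc.2), zero_mul, mul_zero]
  · rw [if_neg (by tauto)]
    have : ∀ a ∈ F, ∑ b ∈ F,
        (if a + s = b + t then sgn (bform s' a) * sgn (bform t' b) else 0) = 0 := by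
      intro a ha
      rw [Set.mem_toFinset] at ha
      refine Finset.sum_eq_zero fun b hb => ?_
      rw [Set.mem_toFinset] at hb
      rw [if_neg]
      intro h
      apply hst
      have : s + t = a + b := by
        have h2 : a + (a + s) = a + (b + t) := by rw [h]
        rw [← add_assoc, ← add_assoc, F2n.add_self, zero_add] at h2
        rw [h2, add_assoc, F2n.add_self, add_zero]
      rw [this]; exact A.add_mem ha hb
    rw [Finset.sum_congr rfl this, Finset.sum_const_zero, mul_zero]

lemma bform_smul_left {n : ℕ} (c : ZMod 2) (x y : F2n n) :
    bform (c • x) y = c * bform x y := by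
  simp only [bform, Finset.mul_sum, Pi.smul_apply, smul_eq_mul]
  exact Finset.sum_congr rfl fun i _ => by ring

lemma bform_smul_right {n : ℕ} (c : ZMod 2) (x y : F2n n) :
    bform x (c • y) = c * bform x y := by
  simp only [bform, Finset.mul_sum, Pi.smul_apply, smul_eq_mul]
  exact Finset.sum_congr rfl fun i _ => by ring

/-- `bform` as a bilinear form. -/
def bB (n : ℕ) : LinearMap.BilinForm (ZMod 2) (F2n n) :=
  LinearMap.mk₂ (ZMod 2) bform bform_add_left bform_smul_left bform_add_right bform_smul_right

lemma bB_apply {n : ℕ} (x y : F2n n) : bB n x y = bform x y := rfl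

lemma dualSub_eq_orthogonal {n : ℕ} (A : Submodule (ZMod 2) (F2n n)) :
    dualSub A = (bB n).orthogonal A := by
  ext x
  rw [LinearMap.BilinForm.mem_orthogonal_iff]
  exact Iff.rfl

lemma bB_nondeg (n : ℕ) : (bB n).Nondegenerate := by
  refine (LinearMap.IsRefl.nondegenerate_iff_separatingLeft
    (fun x y h => by rw [bB_apply, bform_comm]; rwa [bB_apply] at h)).mpr ?_
  intro x hx
  funext i
  have h := hx (Pi.single i 1)
  rw [bB_apply] at h
  simp only [bform, Pi.single_apply, mul_ite, mul_one, mul_zero] at h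
  rw [Finset.sum_ite_eq' Finset.univ i x] at h
  simpa using h

lemma bB_refl (n : ℕ) : (bB n).IsRefl := by
  intro x y h
  rw [bB_apply, bform_comm]
  rwa [bB_apply] at h

lemma card_dual_mul_card {n : ℕ} (A : Submodule (ZMod 2) (F2n n)) :
    Nat.card A * Nat.card (dualSub A) = 2 ^ n := by
  have hA : Nat.card A = 2 ^ Module.finrank (ZMod 2) A := by
    rw [Nat.card_eq_fintype_card, Module.card_eq_pow_finrank (K := ZMod 2), ZMod.card]
  have hB : Nat.card (dualSub A) = 2 ^ Module.finrank (ZMod 2) (dualSub A) := by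
    rw [Nat.card_eq_fintype_card, Module.card_eq_pow_finrank (K := ZMod 2), ZMod.card]
  have hfr : Module.finrank (ZMod 2) (dualSub A) = n - Module.finrank (ZMod 2) A := by
    rw [dualSub_eq_orthogonal, LinearMap.BilinForm.finrank_orthogonal (bB_nondeg n),
      Module.finrank_pi, Fintype.card_fin]
  have hle : Module.finrank (ZMod 2) A ≤ n := by
    have := Submodule.finrank_le A
    rwa [Module.finrank_pi, Fintype.card_fin] at this
  rw [hA, hB, hfr, ← pow_add]
  congr 1
  omega

lemma card_F2n (n : ℕ) : Nat.card (F2n n) = 2 ^ n := by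
  rw [Nat.card_eq_fintype_card]
  simp [ZMod.card]

lemma card_reps {n : ℕ} (A : Submodule (ZMod 2) (F2n n)) (R : Set (F2n n))
    (hR : ∀ x : F2n n, ∃! r, r ∈ R ∧ x - r ∈ A) :
    Nat.card R * Nat.card A = 2 ^ n := by
  have hb : Function.Bijective (fun p : R × A => (p.1 : F2n n) + (p.2 : F2n n)) := by
    constructor
    · rintro ⟨⟨r, hr⟩, ⟨a, ha⟩⟩ ⟨⟨r2, hr2⟩, ⟨a2, ha2⟩⟩ hEq
      simp only at hEq
      obtain ⟨u, _, hu⟩ := hR (r + a)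
      have hsub : ∀ (r' a' : F2n n), (r' + a') - r' = a' := fun r' a' => by
        rw [F2n.sub_eq_add, add_comm r' a', add_assoc, F2n.add_self, add_zero]
      have h1 : r = u := hu r ⟨hr, by rw [hsub]; exact ha⟩
      have h2 : r2 = u := hu r2 ⟨hr2, by rw [hEq, hsub]; exact ha2⟩
      have hr12 : r = r2 := h1.trans h2.symm
      subst hr12
      have : a = a2 := by
        have := hEq
        rwa [add_right_inj] at this
      simp [this]
    · intro x
      obtain ⟨r, ⟨hrR, hrA⟩, _⟩ := hR x
      exact ⟨⟨⟨r, hrR⟩, ⟨x - r, hrA⟩⟩, by simp⟩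
  have h := Nat.card_eq_of_bijective _ hb
  rwa [Nat.card_prod, card_F2n] at h

lemma rep_unique {n : ℕ} {A : Submodule (ZMod 2) (F2n n)} {R : Set (F2n n)}
    (hR : ∀ x : F2n n, ∃! r, r ∈ R ∧ x - r ∈ A) {s t : F2n n}
    (hs : s ∈ R) (ht : t ∈ R) (h : s + t ∈ A) : s = t := by
  obtain ⟨u, _, hu⟩ := hR s
  have h1 : s = u := hu s ⟨hs, by rw [sub_self]; exact A.zero_mem⟩
  have h2 : t = u := hu t ⟨ht, by rw [F2n.sub_eq_add]; exact h⟩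
  rw [h1, h2]

/-- **Coset states form an orthonormal basis.** (a) each coset state is a unit vector;
(b) coset states attached to different pairs of cosets are orthogonal; (c) given systems of
representatives `R`, `R'` of the cosets of `A` and of `A^⊥`, the family
`(|A_{s,s'}⟩)_{s ∈ R, s' ∈ R'}` is an orthonormal basis of `ℂ^{F₂ⁿ}`. -/
theorem cosetState_orthonormal_basis (n : ℕ) (A : Submodule (ZMod 2) (F2n n)) :
    (∀ s s' : F2n n, ‖cosetState n A s s'‖ = 1) ∧
    (∀ s s' t t' : F2n n,
      (coset A s ≠ coset A t ∨ coset (dualSub A) s' ≠ coset (dualSub A) t') →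
      ⟪cosetState n A s s', cosetState n A t t'⟫_ℂ = 0) ∧
    (∀ R R' : Set (F2n n),
      (∀ x : F2n n, ∃! r, r ∈ R ∧ x - r ∈ A) →
      (∀ x : F2n n, ∃! r, r ∈ R' ∧ x - r ∈ dualSub A) →
      Orthonormal ℂ (fun p : R × R' => cosetState n A (p.1 : F2n n) (p.2 : F2n n)) ∧
      Submodule.span ℂ
        (Set.range fun p : R × R' => cosetState n A (p.1 : F2n n) (p.2 : F2n n)) = ⊤) := by
  have hself : ∀ s s' : F2n n, ⟪cosetState n A s s', cosetState n A s s'⟫_ℂ = 1 := by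
    intro s s'
    rw [inner_cosetState, if_pos ⟨by rw [F2n.add_self]; exact A.zero_mem,
      by rw [F2n.add_self]; exact (dualSub A).zero_mem⟩, F2n.add_self, bform_zero_right, sgn_zero]
  have hnorm : ∀ s s' : F2n n, ‖cosetState n A s s'‖ = 1 := by
    intro s s'
    have h := hself s s'
    rw [inner_self_eq_norm_sq_to_K] at h
    norm_cast at h
    rw [show (1:ℂ) = ((1:ℝ):ℂ) by norm_num] at h
    have h2 : ‖cosetState n A s s'‖ ^ 2 = 1 := Complex.ofReal_injective h
    nlinarith [norm_nonneg (cosetState n A s s'), h2]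
  have horth : ∀ s s' t t' : F2n n,
      (coset A s ≠ coset A t ∨ coset (dualSub A) s' ≠ coset (dualSub A) t') →
      ⟪cosetState n A s s', cosetState n A t t'⟫_ℂ = 0 := by
    intro s s' t t' h
    rw [inner_cosetState, if_neg]
    rintro ⟨h1, h2⟩
    rcases h with h | h
    · exact h ((coset_eq_iff A s t).mpr h1)
    · exact h ((coset_eq_iff (dualSub A) s' t').mpr h2)
  refine ⟨hnorm, horth, ?_⟩
  intro R R' hR hR'
  have hON : Orthonormal ℂ (fun p : R × R' => cosetState n A (p.1 : F2n n) (p.2 : F2n n)) := by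
    rw [orthonormal_iff_ite]
    intro i j
    rcases eq_or_ne i j with rfl | hne
    · rw [if_pos rfl]
      exact hself _ _
    · rw [if_neg hne, inner_cosetState, if_neg]
      rintro ⟨h1, h2⟩
      exact hne (Prod.ext (Subtype.ext (rep_unique hR i.1.2 j.1.2 h1))
        (Subtype.ext (rep_unique hR' i.2.2 j.2.2 h2)))
  refine ⟨hON, ?_⟩
  have hNe : Nonempty (↥R × ↥R') := by
    obtain ⟨r, ⟨hr, _⟩, _⟩ := hR 0
    obtain ⟨r', ⟨hr', _⟩, _⟩ := hR' 0
    exact ⟨⟨⟨r, hr⟩, ⟨r', hr'⟩⟩⟩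
  have hcard : Fintype.card (↥R × ↥R') = Module.finrank ℂ (EuclideanSpace ℂ (F2n n)) := by
    rw [finrank_euclideanSpace]
    have h1 := card_reps A R hR
    have h2 := card_reps (dualSub A) R' hR'
    have h3 := card_dual_mul_card A
    have hpos : 0 < 2 ^ n := pow_pos (by norm_num) n
    have hkey : Nat.card (↥R × ↥R') * 2 ^ n = 2 ^ n * 2 ^ n := by
      calc Nat.card (↥R × ↥R') * 2 ^ n
          = Nat.card R * Nat.card R' * (Nat.card A * Nat.card (dualSub A)) := by
            rw [Nat.card_prod, h3]
        _ = (Nat.card R * Nat.card A) * (Nat.card R' * Nat.card (dualSub A)) := by ring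
        _ = 2 ^ n * 2 ^ n := by rw [h1, h2]
    have h4 : Nat.card (↥R × ↥R') = 2 ^ n := Nat.eq_of_mul_eq_mul_right hpos hkey
    have h5 : Fintype.card (F2n n) = 2 ^ n := by rw [← Nat.card_eq_fintype_card, card_F2n]
    rw [← Nat.card_eq_fintype_card, h4, h5]
  have hb := (basisOfOrthonormalOfCardEqFinrank hON hcard).span_eq
  rwa [coe_basisOfOrthonormalOfCardEqFinrank] at hb
end

section
/- Let 1 ≤ d ≤ n and let G be the set of all d-dimensional linear subspaces of F₂ⁿ. Then Σ_{(A, A') ∈ G × G} |A ∩ A'| = |G|² · (1 + (2^d − 1)²/(2ⁿ − 1)). In particular, when n = 2d, the expected cardinality of the intersection of two independent uniformly random d-dimensional subspaces of F₂^{2d} is 1 + (2^d − 1)/(2^d + 1) < 2. -/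
open Finset

/-- Any nonzero vector can be mapped to any other nonzero vector by a linear automorphism. -/
private lemma exists_linEquiv_map {K V : Type*} [Field K] [AddCommGroup V] [Module K V]
    [FiniteDimensional K V] {v w : V} (hv : v ≠ 0) (hw : w ≠ 0) :
    ∃ e : V ≃ₗ[K] V, e v = w := by
  classical
  have hsv := LinearIndepOn.singleton (R := K) (v := id) hv
  have hsw := LinearIndepOn.singleton (R := K) (v := id) hw
  let b1 := Module.Basis.extend hsv
  let b2 := Module.Basis.extend hsw
  have hv' : v ∈ hsv.extend (Set.subset_univ _) := hsv.subset_extend _ rfl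
  have hw' : w ∈ hsw.extend (Set.subset_univ _) := hsw.subset_extend _ rfl
  have hcard : Fintype.card (hsv.extend (Set.subset_univ _))
      = Fintype.card (hsw.extend (Set.subset_univ _)) := by
    rw [← Module.finrank_eq_card_basis b1, ← Module.finrank_eq_card_basis b2]
  let e0 := Fintype.equivOfCardEq hcard
  let e := e0.trans (Equiv.swap (e0 ⟨v, hv'⟩) ⟨w, hw'⟩)
  refine ⟨b1.equiv b2 e, ?_⟩
  have h1 : b1 ⟨v, hv'⟩ = v := Module.Basis.extend_apply_self hsv _
  have h2 : b2 ⟨w, hw'⟩ = w := Module.Basis.extend_apply_self hsw _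
  have h3 : e ⟨v, hv'⟩ = ⟨w, hw'⟩ := by
    simp only [e, Equiv.trans_apply, Equiv.swap_apply_left]
  have h4 := b1.equiv_apply (b' := b2) (i := (⟨v, hv'⟩ : hsv.extend (Set.subset_univ _))) (e := e)
  rw [h1, h3, h2] at h4
  exact h4

/-- **Expected intersection size of two random `d`-dimensional subspaces of `F₂ⁿ`.** If `G`
is the (finite) set of all `d`-dimensional subspaces of `F₂ⁿ`, then
`Σ_{(A,A') ∈ G×G} |A ∩ A'| = |G|² · (1 + (2^d − 1)²/(2ⁿ − 1))`; in particular, for `n = 2d`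
the expected intersection size of two independent uniform `d`-dimensional subspaces is
`1 + (2^d − 1)/(2^d + 1) < 2`. -/
theorem sum_card_inter_subspaces (n d : ℕ) (h1 : 1 ≤ d) (hdn : d ≤ n)
    (G : Finset (Submodule (ZMod 2) (Fin n → ZMod 2)))
    (hG : ∀ A : Submodule (ZMod 2) (Fin n → ZMod 2),
      A ∈ G ↔ Module.finrank (ZMod 2) A = d) :
    (∑ A ∈ G, ∑ A' ∈ G, (Nat.card ↥(A ⊓ A') : ℝ))
        = (G.card : ℝ) ^ 2 * (1 + ((2 : ℝ) ^ d - 1) ^ 2 / ((2 : ℝ) ^ n - 1)) ∧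
    (n = 2 * d →
      (1 : ℝ) + ((2 : ℝ) ^ d - 1) / ((2 : ℝ) ^ d + 1) < 2) := by
  classical
  constructor
  · set V := (Fin n → ZMod 2) with hV
    have hn1 : 1 ≤ n := le_trans h1 hdn
    set f : V → ℕ := fun v => (G.filter fun A => v ∈ A).card with hf
    have hcardV : Fintype.card V = 2 ^ n := by
      simp [hV, Fintype.card_fun]
    -- |A ∩ A'| as a sum of indicator products
    have step1 : ∀ A ∈ G, ∀ A' ∈ G, (Nat.card ↥(A ⊓ A') : ℝ)
        = ∑ v : V, (if v ∈ A then (1 : ℝ) else 0) * (if v ∈ A' then 1 else 0) := by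
      intro A _ A' _
      rw [Nat.card_eq_fintype_card, Fintype.card_subtype]
      rw [Finset.card_filter]
      push_cast
      refine Finset.sum_congr rfl fun v _ => ?_
      by_cases hA : v ∈ A <;> by_cases hA' : v ∈ A' <;>
        simp [hA, hA', Submodule.mem_inf]
    -- indicator sums give f
    have hfsum : ∀ v : V, (∑ A ∈ G, (if v ∈ A then (1 : ℝ) else 0)) = (f v : ℝ) := by
      intro v
      rw [hf]
      push_cast [Finset.card_filter]
      rfl
    have step2 : (∑ A ∈ G, ∑ A' ∈ G, (Nat.card ↥(A ⊓ A') : ℝ)) = ∑ v : V, (f v : ℝ) ^ 2 := by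
      rw [Finset.sum_congr rfl fun A hA => Finset.sum_congr rfl fun A' hA' => step1 A hA A' hA']
      rw [Finset.sum_congr rfl fun A _ => Finset.sum_comm, Finset.sum_comm]
      refine Finset.sum_congr rfl fun v _ => ?_
      rw [← Finset.sum_mul_sum, hfsum v, sq]
    -- f 0 = |G|
    have hf0 : f 0 = G.card := by
      rw [hf]
      simp only
      rw [Finset.filter_true_of_mem fun A _ => A.zero_mem]
    -- constancy of f on nonzero vectors
    have hconst : ∀ v w : V, v ≠ 0 → w ≠ 0 → f v = f w := by
      intro v w hv hw
      obtain ⟨e, he⟩ := exists_linEquiv_map (K := ZMod 2) hv hw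
      rw [hf]
      simp only
      refine Finset.card_bij' (fun A _ => A.map (e : V →ₗ[ZMod 2] V))
        (fun B _ => B.map (e.symm : V →ₗ[ZMod 2] V)) ?_ ?_ ?_ ?_
      · intro A hA
        rw [Finset.mem_filter] at hA ⊢
        refine ⟨(hG _).2 ?_, ?_⟩
        · rw [LinearEquiv.finrank_map_eq]
          exact (hG _).1 hA.1
        · exact ⟨v, hA.2, he⟩
      · intro B hB
        rw [Finset.mem_filter] at hB ⊢
        refine ⟨(hG _).2 ?_, ?_⟩
        · rw [LinearEquiv.finrank_map_eq]
          exact (hG _).1 hB.1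
        · exact ⟨w, hB.2, by rw [← he]; exact e.symm_apply_apply v⟩
      · intro A _
        show Submodule.map (e.symm : V →ₗ[ZMod 2] V) (Submodule.map (e : V →ₗ[ZMod 2] V) A) = A
        rw [← Submodule.map_comp]; simp
      · intro B _
        show Submodule.map (e : V →ₗ[ZMod 2] V) (Submodule.map (e.symm : V →ₗ[ZMod 2] V) B) = B
        rw [← Submodule.map_comp]; simp
    -- each A ∈ G has 2^d elements
    have hAcard : ∀ A ∈ G, (Finset.univ.filter fun v : V => v ∈ A).card = 2 ^ d := by
      intro A hA
      have : (Finset.univ.filter fun v : V => v ∈ A).card = Fintype.card A :=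
        (Fintype.card_subtype _).symm
      rw [this, Module.card_eq_pow_finrank (K := ZMod 2), ZMod.card, (hG A).1 hA]
    -- total count
    have keyN : (∑ v : V, f v) = G.card * 2 ^ d := by
      have : ∀ v : V, f v = ∑ A ∈ G, (if v ∈ A then 1 else 0) := by
        intro v; rw [hf]; simp only; rw [Finset.card_filter]
      rw [Finset.sum_congr rfl fun v _ => this v, Finset.sum_comm]
      rw [Finset.sum_congr rfl fun A hA => ?_]
      · rw [Finset.sum_const, smul_eq_mul, mul_comm]
      · rw [← Finset.card_filter, hAcard A hA]
    set c : ℕ := f (fun _ => 1) with hc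
    have hone : (fun _ => (1 : ZMod 2)) ≠ (0 : V) := by
      intro h
      have := congrFun h ⟨0, hn1⟩
      rw [Pi.zero_apply] at this
      exact one_ne_zero this
    have hcv : ∀ v : V, v ≠ 0 → f v = c := fun v hv => hconst v _ hv hone
    -- split off zero
    have hsplit : (∑ v : V, f v) = G.card + (2 ^ n - 1) * c := by
      rw [← Finset.add_sum_erase _ _ (Finset.mem_univ (0 : V)), hf0]
      congr 1
      rw [Finset.sum_congr rfl fun v hv => hcv v (Finset.mem_erase.1 hv).1]
      rw [Finset.sum_const, smul_eq_mul, Finset.card_erase_of_mem (Finset.mem_univ _),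
        Finset.card_univ, hcardV]
    have h2n : (1 : ℕ) ≤ 2 ^ n := Nat.one_le_two_pow
    -- real-valued key identity
    have keyR : ((2 : ℝ) ^ n - 1) * (c : ℝ) = (G.card : ℝ) * ((2 : ℝ) ^ d - 1) := by
      have := keyN
      rw [hsplit] at this
      have := congrArg (Nat.cast : ℕ → ℝ) this
      push_cast [Nat.cast_sub h2n] at this
      ring_nf
      ring_nf at this
      linarith
    have hX : (2 : ℝ) ^ n - 1 ≠ 0 := by
      have : (2 : ℝ) ^ 1 ≤ 2 ^ n := pow_le_pow_right₀ one_le_two hn1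
      norm_num at this
      linarith
    rw [step2, ← Finset.add_sum_erase _ _ (Finset.mem_univ (0 : V)), hf0]
    rw [Finset.sum_congr rfl fun v hv => by rw [hcv v (Finset.mem_erase.1 hv).1]]
    rw [Finset.sum_const, Finset.card_erase_of_mem (Finset.mem_univ _), Finset.card_univ,
      hcardV, nsmul_eq_mul, Nat.cast_sub h2n]
    push_cast
    field_simp
    linear_combination (((2:ℝ)^n - 1) * c + (G.card : ℝ) * ((2:ℝ)^d - 1)) * keyR
  · intro _
    have hpos : (0 : ℝ) < 2 ^ d + 1 := by positivity
    have : ((2 : ℝ) ^ d - 1) / ((2 : ℝ) ^ d + 1) < 1 := by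
      rw [div_lt_one hpos]; linarith
    linarith
end
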